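/- arXiv:2107.00526 — 6 statements merged into one kernel-verified Lean document; each statement's English description precedes it below -/
import Mathlib

section
/- Let X_1, …, X_n be i.i.d. random variables from a continuous distribution with monotone (non-decreasing) hazard rate. Then for any n' ≤ n, E[max_{i ≤ n'} X_i] / E[max_{i ≤ n} X_i] ≥ H_{n'} / H_n, where H_k denotes the k-th harmonic number. -/
open MeasureTheory Real ProbabilityTheory Set Filter intervalIntegral

lemma poly_compare {n' n : ℕ} (hn'1 : 1 ≤ n') (hnn : n' ≤ n) {s t w : ℝ}
    (hs : 0 ≤ s) (hst : s ≤ t) (htw : t ≤ w) :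
    (n' : ℝ) * (t ^ n - s ^ n) ≤ (n : ℝ) * w ^ (n - n') * (t ^ n' - s ^ n') := by
  obtain ⟨a, rfl⟩ : ∃ a, n' = a + 1 := ⟨n' - 1, by omega⟩
  obtain ⟨b, rfl⟩ : ∃ b, n = (a + 1) + b := ⟨n - (a + 1), by omega⟩
  have hred : (a + 1) + b - (a + 1) = b := by omega
  have h1 : ∫ x in s..t, x ^ a = (t ^ (a + 1) - s ^ (a + 1)) / (a + 1) := by
    rw [integral_pow]
  have h2 : ∫ x in s..t, x ^ (a + b) = (t ^ (a + 1 + b) - s ^ (a + 1 + b)) / (a + 1 + b) := by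
    rw [integral_pow]; push_cast; ring_nf
  have key : ∫ x in s..t, x ^ (a + b) ≤ ∫ x in s..t, w ^ b * x ^ a := by
    apply integral_mono_on hst
    · exact (continuous_pow _).intervalIntegrable _ _
    · exact (continuous_const.mul (continuous_pow _)).intervalIntegrable _ _
    · intro x hx
      have hx0 : 0 ≤ x := hs.trans hx.1
      have hxw : x ≤ w := hx.2.trans htw
      calc x ^ (a + b) = x ^ b * x ^ a := by rw [← pow_add]; ring_nf
        _ ≤ w ^ b * x ^ a := by
            exact mul_le_mul_of_nonneg_right (pow_le_pow_left₀ hx0 hxw _) (pow_nonneg hx0 _)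
  rw [intervalIntegral.integral_const_mul] at key
  have hn0 : (0:ℝ) < (a:ℝ) + 1 + b := by positivity
  have hn'0 : (0:ℝ) < (a:ℝ) + 1 := by positivity
  have e1 : t ^ (a + 1) - s ^ (a + 1) = ((a:ℝ) + 1) * ∫ x in s..t, x ^ a := by
    rw [h1]; field_simp
  have e2 : t ^ (a + 1 + b) - s ^ (a + 1 + b) = ((a:ℝ) + 1 + b) * ∫ x in s..t, x ^ (a + b) := by
    rw [h2]; field_simp
  rw [hred]
  push_cast
  rw [e1, e2]
  nlinarith [mul_le_mul_of_nonneg_left key (mul_nonneg hn'0.le hn0.le)]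

lemma poly_compare2 {n' n : ℕ} (hn'1 : 1 ≤ n') (hnn : n' ≤ n) {s t w : ℝ}
    (hw : 0 ≤ w) (hws : w ≤ s) (hst : s ≤ t) :
    (n : ℝ) * w ^ (n - n') * (t ^ n' - s ^ n') ≤ (n' : ℝ) * (t ^ n - s ^ n) := by
  obtain ⟨a, rfl⟩ : ∃ a, n' = a + 1 := ⟨n' - 1, by omega⟩
  obtain ⟨b, rfl⟩ : ∃ b, n = (a + 1) + b := ⟨n - (a + 1), by omega⟩
  have hred : (a + 1) + b - (a + 1) = b := by omega
  have h1 : ∫ x in s..t, x ^ a = (t ^ (a + 1) - s ^ (a + 1)) / (a + 1) := by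
    rw [integral_pow]
  have h2 : ∫ x in s..t, x ^ (a + b) = (t ^ (a + 1 + b) - s ^ (a + 1 + b)) / (a + 1 + b) := by
    rw [integral_pow]; push_cast; ring_nf
  have key : ∫ x in s..t, w ^ b * x ^ a ≤ ∫ x in s..t, x ^ (a + b) := by
    apply integral_mono_on hst
    · exact (continuous_const.mul (continuous_pow _)).intervalIntegrable _ _
    · exact (continuous_pow _).intervalIntegrable _ _
    · intro x hx
      have hwx : w ≤ x := hws.trans hx.1
      calc w ^ b * x ^ a ≤ x ^ b * x ^ a :=
            mul_le_mul_of_nonneg_right (pow_le_pow_left₀ hw hwx _)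
              (pow_nonneg (hw.trans hwx) _)
        _ = x ^ (a + b) := by rw [← pow_add]; ring_nf
  rw [intervalIntegral.integral_const_mul] at key
  have hn0 : (0:ℝ) < (a:ℝ) + 1 + b := by positivity
  have hn'0 : (0:ℝ) < (a:ℝ) + 1 := by positivity
  have e1 : t ^ (a + 1) - s ^ (a + 1) = ((a:ℝ) + 1) * ∫ x in s..t, x ^ a := by
    rw [h1]; field_simp
  have e2 : t ^ (a + 1 + b) - s ^ (a + 1 + b) = ((a:ℝ) + 1 + b) * ∫ x in s..t, x ^ (a + b) := by
    rw [h2]; field_simp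
  rw [hred]
  push_cast
  rw [e1, e2]
  nlinarith [mul_le_mul_of_nonneg_left key (mul_nonneg hn'0.le hn0.le)]

variable {lam : ℝ}

lemma exp_tendsto (hlam : 0 < lam) :
    Tendsto (fun t : ℝ => Real.exp (-lam * t)) atTop (nhds 0) := by
  have h1 : Tendsto (fun t : ℝ => lam * t) atTop atTop :=
    Tendsto.const_mul_atTop hlam tendsto_id
  have h2 := tendsto_exp_neg_atTop_nhds_zero.comp h1
  apply h2.congr
  intro t
  simp [Function.comp, neg_mul]

lemma g_integrable (hlam : 0 < lam) (j : ℕ) :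
    IntegrableOn (fun t : ℝ => (1 - Real.exp (-lam * t)) ^ j * Real.exp (-lam * t))
      (Ioi 0) := by
  apply Integrable.mono (exp_neg_integrableOn_Ioi 0 hlam)
  · exact (((continuous_const.sub
      (Real.continuous_exp.comp (continuous_const.mul continuous_id))).pow j).mul
      (Real.continuous_exp.comp (continuous_const.mul continuous_id))).aestronglyMeasurable
  · filter_upwards [ae_restrict_mem measurableSet_Ioi] with t ht
    have h0 : (0:ℝ) < t := ht
    have he1 : Real.exp (-lam * t) ≤ 1 := by
      rw [Real.exp_le_one_iff]; nlinarith
    have he0 : (0:ℝ) ≤ Real.exp (-lam * t) := (Real.exp_pos _).le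
    have hx0 : (0:ℝ) ≤ 1 - Real.exp (-lam * t) := by linarith
    have hx1 : 1 - Real.exp (-lam * t) ≤ 1 := by linarith
    rw [Real.norm_eq_abs, Real.norm_eq_abs, abs_of_nonneg (mul_nonneg (pow_nonneg hx0 _) he0),
      abs_of_nonneg he0]
    exact mul_le_of_le_one_left he0 (pow_le_one₀ hx0 hx1)

lemma g_integral (hlam : 0 < lam) (j : ℕ) :
    ∫ t in Ioi (0:ℝ), (1 - Real.exp (-lam * t)) ^ j * Real.exp (-lam * t)
      = 1 / (((j:ℝ) + 1) * lam) := by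
  set c : ℝ := ((j:ℝ) + 1) * lam with hc
  have hcpos : 0 < c := by positivity
  have hΦ : ∀ t : ℝ, HasDerivAt (fun t : ℝ => (1 - Real.exp (-lam * t)) ^ (j+1) / c)
      ((1 - Real.exp (-lam * t)) ^ j * Real.exp (-lam * t)) t := by
    intro t
    have h1 : HasDerivAt (fun t : ℝ => -lam * t) (-lam) t := by
      simpa using (hasDerivAt_id t).const_mul (-lam)
    have h2 := h1.exp
    have h3 := ((hasDerivAt_const t (1:ℝ)).sub h2).pow (j+1)
    have h4 := h3.div_const c
    refine h4.congr_deriv ?_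
    simp only [Pi.sub_apply, Nat.add_sub_cancel]
    rw [hc]
    field_simp
    push_cast
    ring
  have hlim : Tendsto (fun t : ℝ => (1 - Real.exp (-lam * t)) ^ (j+1) / c) atTop
      (nhds (1 / c)) := by
    have := (((exp_tendsto hlam).const_sub 1).pow (j+1)).div_const c
    simpa using this
  have := integral_Ioi_of_hasDerivAt_of_tendsto' (fun x _ => hΦ x)
    (g_integrable hlam j) hlim
  rw [this]
  simp [Real.exp_zero]

lemma e_integrable (hlam : 0 < lam) (k : ℕ) :
    IntegrableOn (fun t : ℝ => 1 - (1 - Real.exp (-lam * t)) ^ k) (Ioi 0) := by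
  have hgeom : ∀ t : ℝ, 1 - (1 - Real.exp (-lam * t)) ^ k
      = ∑ j ∈ Finset.range k, (1 - Real.exp (-lam * t)) ^ j * Real.exp (-lam * t) := by
    intro t
    have := geom_sum_mul (1 - Real.exp (-lam * t)) k
    have h2 : (∑ j ∈ Finset.range k, (1 - Real.exp (-lam * t)) ^ j) * Real.exp (-lam * t)
        = 1 - (1 - Real.exp (-lam * t)) ^ k := by nlinarith [this]
    rw [← h2, Finset.sum_mul]
  simp_rw [hgeom]
  exact integrable_finset_sum _ (fun j _ => g_integrable hlam j)

lemma e_integral (hlam : 0 < lam) (k : ℕ) :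
    ∫ t in Ioi (0:ℝ), (1 - (1 - Real.exp (-lam * t)) ^ k) = (harmonic k : ℝ) / lam := by
  have hgeom : ∀ t : ℝ, 1 - (1 - Real.exp (-lam * t)) ^ k
      = ∑ j ∈ Finset.range k, (1 - Real.exp (-lam * t)) ^ j * Real.exp (-lam * t) := by
    intro t
    have := geom_sum_mul (1 - Real.exp (-lam * t)) k
    have h2 : (∑ j ∈ Finset.range k, (1 - Real.exp (-lam * t)) ^ j) * Real.exp (-lam * t)
        = 1 - (1 - Real.exp (-lam * t)) ^ k := by nlinarith [this]
    rw [← h2, Finset.sum_mul]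
  simp_rw [hgeom]
  rw [integral_finset_sum _ (fun j _ => g_integrable hlam j)]
  have : ∀ j ∈ Finset.range k,
      ∫ t in Ioi (0:ℝ), (1 - Real.exp (-lam * t)) ^ j * Real.exp (-lam * t)
        = 1 / (((j:ℝ) + 1) * lam) := fun j _ => g_integral hlam j
  rw [Finset.sum_congr rfl this]
  have hharm : (harmonic k : ℝ) = ∑ j ∈ Finset.range k, ((j:ℝ) + 1)⁻¹ := by
    rw [harmonic]; push_cast
    exact Finset.sum_congr rfl (fun j _ => by ring)
  rw [hharm, Finset.sum_div]
  apply Finset.sum_congr rfl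
  intro j _
  rw [one_div, mul_inv, div_eq_mul_inv]

lemma pow_anti_aux {x : ℝ} (h0 : 0 ≤ x) (h1 : x ≤ 1) {a b : ℕ} (hab : a ≤ b) :
    x ^ b ≤ x ^ a := by
  calc x ^ b = x ^ a * x ^ (b - a) := by rw [← pow_add]; congr 1; omega
    _ ≤ x ^ a * 1 := mul_le_mul_of_nonneg_left (pow_le_one₀ h0 h1) (pow_nonneg h0 _)
    _ = x ^ a := mul_one _

lemma key_rpow (F : ℝ → ℝ) (hF0 : F 0 ≤ 0) (hF1 : ∀ t, F t ≤ 1)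
    (hqmono : Monotone (fun t => max (F t) 0))
    (hMHR : ConcaveOn ℝ {x : ℝ | F x < 1} (fun x => Real.log (1 - F x)))
    {s t : ℝ} (hs : 0 < s) (hst : s < t) :
    (1 - max (F t) 0) ^ ((s / t : ℝ)) ≤ 1 - max (F s) 0 := by
  have ht : 0 < t := hs.trans hst
  have hθpos : 0 < s / t := div_pos hs ht
  have hθle : s / t ≤ 1 := (div_le_one ht).mpr hst.le
  have hq0 : (0:ℝ) ≤ max (F s) 0 := le_max_right _ _
  have hq1 : max (F s) 0 ≤ 1 := max_le (hF1 s) zero_le_one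
  have hqt0 : (0:ℝ) ≤ max (F t) 0 := le_max_right _ _
  have hqt1 : max (F t) 0 ≤ 1 := max_le (hF1 t) zero_le_one
  rcases le_or_gt (F t) 0 with hFt | hFt
  · -- q t = 0, need q s = 0
    have hqt : max (F t) 0 = 0 := max_eq_right hFt
    have hqs : max (F s) 0 = 0 := by
      have := hqmono hst.le
      simp only at this
      rw [hqt] at this
      exact le_antisymm this hq0
    rw [hqt, hqs]
    simp
  · -- 0 < F t
    have hqt : max (F t) 0 = F t := max_eq_left hFt.le
    rcases eq_or_lt_of_le (hF1 t) with hFt1 | hFt1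
    · -- F t = 1
      rw [hqt, hFt1]
      rw [sub_self, Real.zero_rpow hθpos.ne']
      linarith
    · -- 0 < F t < 1
      have hFs1 : F s ≤ F t := by
        have := hqmono hst.le
        simp only [hqt] at this
        exact le_trans (le_max_left _ _) this
      have hFs_lt : F s < 1 := lt_of_le_of_lt hFs1 hFt1
      have hmem0 : (0:ℝ) ∈ {x : ℝ | F x < 1} := by
        simp only [Set.mem_setOf_eq]; linarith
      have hmemt : t ∈ {x : ℝ | F x < 1} := hFt1
      have hcc := hMHR.2 hmem0 hmemt (by linarith : (0:ℝ) ≤ 1 - s / t)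
        hθpos.le (by ring)
      have hpt : (1 - s / t) • (0:ℝ) + (s / t) • t = s := by
        simp [smul_eq_mul]
        field_simp
      rw [hpt] at hcc
      have hlog0 : 0 ≤ Real.log (1 - F 0) := Real.log_nonneg (by linarith)
      have hkey : (s / t) * Real.log (1 - F t) ≤ Real.log (1 - F s) := by
        have h1 : 0 ≤ (1 - s / t) * Real.log (1 - F 0) :=
          mul_nonneg (by linarith) hlog0
        simp only [smul_eq_mul] at hcc
        linarith
      have hFt_pos : 0 < 1 - F t := by linarith
      have hFs_pos : 0 < 1 - F s := by linarith
      rw [hqt]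
      have hrp : (1 - F t) ^ ((s / t : ℝ)) = Real.exp ((s / t) * Real.log (1 - F t)) := by
        rw [Real.rpow_def_of_pos hFt_pos, mul_comm]
      rcases le_or_gt 0 (F s) with hFs0 | hFs0
      · rw [max_eq_left hFs0]
        rw [hrp]
        calc Real.exp ((s / t) * Real.log (1 - F t)) ≤ Real.exp (Real.log (1 - F s)) :=
              Real.exp_le_exp.mpr hkey
          _ = 1 - F s := Real.exp_log hFs_pos
      · rw [max_eq_right hFs0.le]
        rw [sub_zero]
        exact Real.rpow_le_one (by linarith) (by linarith) hθpos.le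

lemma cross_lemma (F : ℝ → ℝ) (hF0 : F 0 ≤ 0) (hF1 : ∀ t, F t ≤ 1)
    (hqmono : Monotone (fun t => max (F t) 0))
    (hMHR : ConcaveOn ℝ {x : ℝ | F x < 1} (fun x => Real.log (1 - F x)))
    {lam : ℝ} (hlam : 0 < lam) {s t : ℝ} (hs : 0 < s) (hst : s < t)
    (h : 1 - max (F s) 0 < Real.exp (-lam * s)) :
    1 - max (F t) 0 < Real.exp (-lam * t) := by
  have ht : 0 < t := hs.trans hst
  by_contra hge
  push_neg at hge
  have h1 : Real.exp (-lam * t) ^ ((s / t : ℝ)) ≤ (1 - max (F t) 0) ^ ((s / t : ℝ)) :=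
    Real.rpow_le_rpow (Real.exp_pos _).le hge (div_nonneg hs.le ht.le)
  have h2 := key_rpow F hF0 hF1 hqmono hMHR hs hst
  have h3 : Real.exp (-lam * t) ^ ((s / t : ℝ)) = Real.exp (-lam * s) := by
    rw [← Real.exp_log (Real.exp_pos (-lam * t)), Real.log_exp, ← Real.exp_mul]
    congr 1
    field_simp
  rw [h3] at h1
  linarith

set_option maxHeartbeats 2000000 in
/-- For i.i.d. draws from a continuous MHR distribution (log(1-F) concave where F < 1),
`E[max of n'] / E[max of n] ≥ H_{n'} / H_n` for `n' ≤ n`. -/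
theorem stmt3 {Ω : Type*} [MeasurableSpace Ω] (μ : Measure Ω) [IsProbabilityMeasure μ]
    (n n' : ℕ) (hn' : 1 ≤ n') (hn : n' ≤ n)
    (F : ℝ → ℝ) (X : ℕ → Ω → ℝ) (hmeas : ∀ i, Measurable (X i))
    (hindep : iIndepFun X μ)
    (hCDF : ∀ i, ∀ t : ℝ, μ {ω | X i ω ≤ t} = ENNReal.ofReal (F t))
    (hFcont : Continuous F)
    (hnonneg : ∀ i, ∀ᵐ ω ∂μ, 0 ≤ X i ω)
    (hMHR : ConcaveOn ℝ {x : ℝ | F x < 1} (fun x => Real.log (1 - F x)))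
    (hint : Integrable
      (fun ω => (Finset.range n).sup' (Finset.nonempty_range_iff.mpr (by omega))
        (fun i => X i ω)) μ)
    (hpos : 0 < ∫ ω, (Finset.range n).sup' (Finset.nonempty_range_iff.mpr (by omega))
        (fun i => X i ω) ∂μ) :
    (∫ ω, (Finset.range n').sup' (Finset.nonempty_range_iff.mpr (by omega))
        (fun i => X i ω) ∂μ) /
      (∫ ω, (Finset.range n).sup' (Finset.nonempty_range_iff.mpr (by omega))
        (fun i => X i ω) ∂μ)
      ≥ (harmonic n' : ℝ) / (harmonic n : ℝ) := by
  classical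
  -- Basic facts about F and q = max F 0
  have hF1 : ∀ t, F t ≤ 1 := by
    intro t
    by_contra h
    push_neg at h
    have h1 : μ {ω | X 0 ω ≤ t} ≤ 1 := prob_le_one
    rw [hCDF 0 t, ENNReal.ofReal_le_one] at h1
    linarith
  set q : ℝ → ℝ := fun t => max (F t) 0 with hq_def
  have hqeq : ∀ t, max (F t) 0 = q t := fun t => rfl
  have hq0 : ∀ t, 0 ≤ q t := fun t => le_max_right _ _
  have hq1 : ∀ t, q t ≤ 1 := fun t => max_le (hF1 t) zero_le_one
  have hofq : ∀ t, ENNReal.ofReal (F t) = ENNReal.ofReal (q t) := by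
    intro t
    rcases le_or_gt (F t) 0 with h | h
    · rw [ENNReal.ofReal_of_nonpos h, ← hqeq t, max_eq_right h, ENNReal.ofReal_zero]
    · rw [← hqeq t, max_eq_left h.le]
  have hqmono : Monotone q := by
    intro s t hst
    have hm : μ {ω | X 0 ω ≤ s} ≤ μ {ω | X 0 ω ≤ t} :=
      measure_mono (fun ω hω => le_trans hω hst)
    rw [hCDF 0 s, hCDF 0 t, hofq s, hofq t] at hm
    exact (ENNReal.ofReal_le_ofReal_iff (hq0 t)).mp hm
  have hFneg : ∀ u, u < 0 → F u ≤ 0 := by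
    intro u hu
    have hnull : μ {ω | X 0 ω ≤ u} = 0 := by
      apply measure_mono_null (fun ω hω => ?_) ((ae_iff).mp (hnonneg 0))
      simp only [Set.mem_setOf_eq, not_le]
      exact lt_of_le_of_lt hω hu
    rw [hCDF 0 u] at hnull
    exact ENNReal.ofReal_eq_zero.mp hnull
  have hF0 : F 0 ≤ 0 := by
    have htd : Tendsto F (nhdsWithin 0 (Set.Iio 0)) (nhds (F 0)) :=
      (hFcont.tendsto 0).mono_left nhdsWithin_le_nhds
    apply le_of_tendsto htd
    filter_upwards [self_mem_nhdsWithin] with u hu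
    exact hFneg u hu
  have hq00 : q 0 = 0 := by rw [← hqeq 0, max_eq_right hF0]
  -- maxima
  have hkn : (Finset.range n).Nonempty := Finset.nonempty_range_iff.mpr (by omega)
  have hkn' : (Finset.range n').Nonempty := Finset.nonempty_range_iff.mpr (by omega)
  set Mb : Ω → ℝ := fun ω => (Finset.range n).sup' hkn (fun i => X i ω) with hMb
  set Ms : Ω → ℝ := fun ω => (Finset.range n').sup' hkn' (fun i => X i ω) with hMs
  have hMbm : Measurable Mb := by
    have h := Finset.measurable_sup' hkn (fun i (_ : i ∈ Finset.range n) => hmeas i)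
    convert h using 1
    ext ω
    rw [Finset.sup'_apply]
  have hMsm : Measurable Ms := by
    have h := Finset.measurable_sup' hkn' (fun i (_ : i ∈ Finset.range n') => hmeas i)
    convert h using 1
    ext ω
    rw [Finset.sup'_apply]
  have hae0 : ∀ᵐ ω ∂μ, ∀ i, 0 ≤ X i ω := (ae_all_iff).mpr hnonneg
  have hMsle : ∀ ω, Ms ω ≤ Mb ω := by
    intro ω
    apply Finset.sup'_le
    intro i hi
    exact Finset.le_sup' (fun i => X i ω)
      (Finset.mem_range.mpr (lt_of_lt_of_le (Finset.mem_range.mp hi) hn))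
  have hX0Ms : ∀ ω, X 0 ω ≤ Ms ω := fun ω =>
    Finset.le_sup' (fun i => X i ω) (Finset.mem_range.mpr (by omega))
  have hX0Mb : ∀ ω, X 0 ω ≤ Mb ω := fun ω =>
    Finset.le_sup' (fun i => X i ω) (Finset.mem_range.mpr (by omega))
  have hMb_nn : ∀ᵐ ω ∂μ, 0 ≤ Mb ω := by
    filter_upwards [hae0] with ω hω
    exact le_trans (hω 0) (hX0Mb ω)
  have hMs_nn : ∀ᵐ ω ∂μ, 0 ≤ Ms ω := by
    filter_upwards [hae0] with ω hω
    exact le_trans (hω 0) (hX0Ms ω)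
  have hintb : Integrable Mb μ := hint
  have hints : Integrable Ms μ := by
    apply hintb.mono hMsm.aestronglyMeasurable
    filter_upwards [hae0] with ω hω
    rw [Real.norm_eq_abs, Real.norm_eq_abs, abs_of_nonneg (le_trans (hω 0) (hX0Ms ω)),
      abs_of_nonneg (le_trans (hω 0) (hX0Mb ω))]
    exact hMsle ω
  -- CDF of the maxima
  have hMcdf : ∀ (k : ℕ) (hk : (Finset.range k).Nonempty) (t : ℝ),
      μ {ω | (Finset.range k).sup' hk (fun i => X i ω) ≤ t} = ENNReal.ofReal (q t) ^ k := by
    intro k hk t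
    have hset : {ω | (Finset.range k).sup' hk (fun i => X i ω) ≤ t}
        = ⋂ i ∈ Finset.range k, {ω | X i ω ≤ t} := by
      ext ω
      simp [Finset.sup'_le_iff]
    have hbi : μ (⋂ i ∈ Finset.range k, {ω | X i ω ≤ t})
        = ∏ i ∈ Finset.range k, μ {ω | X i ω ≤ t} :=
      hindep.meas_biInter (S := Finset.range k) (s := fun i => {ω | X i ω ≤ t})
        (fun i _ => ⟨Set.Iic t, measurableSet_Iic, rfl⟩)
    rw [hset, hbi]
    rw [Finset.prod_congr rfl (fun i _ => by rw [hCDF i t, hofq t] :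
      ∀ i ∈ Finset.range k, μ {ω | X i ω ≤ t} = ENNReal.ofReal (q t))]
    rw [Finset.prod_const, Finset.card_range]
  have htailE : ∀ (k : ℕ) (hk : (Finset.range k).Nonempty) (t : ℝ),
      μ {ω | t < (Finset.range k).sup' hk (fun i => X i ω)}
        = 1 - ENNReal.ofReal (q t ^ k) := by
    intro k hk t
    have hmk : Measurable (fun ω => (Finset.range k).sup' hk (fun i => X i ω)) := by
      have h := Finset.measurable_sup' hk (fun i (_ : i ∈ Finset.range k) => hmeas i)
      convert h using 1
      ext ω
      rw [Finset.sup'_apply]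
    have hsetc : {ω | t < (Finset.range k).sup' hk (fun i => X i ω)}
        = {ω | (Finset.range k).sup' hk (fun i => X i ω) ≤ t}ᶜ := by
      ext ω
      simp [not_le]
    have hmset : MeasurableSet {ω | ((Finset.range k).sup' hk fun i => X i ω) ≤ t} :=
      hmk measurableSet_Iic
    rw [hsetc, prob_compl_eq_one_sub hmset, hMcdf k hk t,
      ← ENNReal.ofReal_pow (hq0 t)]
  have htail : ∀ (k : ℕ) (hk : (Finset.range k).Nonempty) (t : ℝ),
      (μ {ω | t < (Finset.range k).sup' hk (fun i => X i ω)}).toReal = 1 - q t ^ k := by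
    intro k hk t
    rw [htailE k hk t,
      ENNReal.toReal_sub_of_le (ENNReal.ofReal_le_one.mpr (pow_le_one₀ (hq0 t) (hq1 t)))
        ENNReal.one_ne_top,
      ENNReal.toReal_ofReal (pow_nonneg (hq0 t) k), ENNReal.toReal_one]
  -- expectations as tail integrals
  have hEMb : ∫ ω, Mb ω ∂μ = ∫ t in Set.Ioi (0:ℝ), (1 - q t ^ n) := by
    rw [hintb.integral_eq_integral_meas_lt hMb_nn]
    exact integral_congr_ae (ae_of_all _ (fun t => htail n hkn t))
  have hEMs : ∫ ω, Ms ω ∂μ = ∫ t in Set.Ioi (0:ℝ), (1 - q t ^ n') := by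
    rw [hints.integral_eq_integral_meas_lt hMs_nn]
    exact integral_congr_ae (ae_of_all _ (fun t => htail n' hkn' t))
  set Ib := ∫ t in Set.Ioi (0:ℝ), (1 - q t ^ n) with hIb
  set Is := ∫ t in Set.Ioi (0:ℝ), (1 - q t ^ n') with hIs
  have hpos' : 0 < ∫ ω, Mb ω ∂μ := hpos
  have hIbpos : 0 < Ib := by rw [← hEMb]; exact hpos'
  -- integrability of tail integrands
  have hqcont : Continuous q := hFcont.max continuous_const
  have hfb_int : IntegrableOn (fun t => 1 - q t ^ n) (Set.Ioi 0) volume := by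
    constructor
    · exact (continuous_const.sub (hqcont.pow n)).aestronglyMeasurable
    · rw [hasFiniteIntegral_iff_ofReal (ae_of_all _ (fun t => by
        show (0:ℝ) ≤ 1 - q t ^ n
        nlinarith [pow_le_one₀ (hq0 t) (hq1 t) (n := n)]))]
      have hlcb := lintegral_eq_lintegral_meas_lt μ hMb_nn hMbm.aemeasurable
      have hcongr : ∫⁻ t in Set.Ioi (0:ℝ), ENNReal.ofReal (1 - q t ^ n)
          = ∫⁻ t in Set.Ioi (0:ℝ), μ {ω | t < Mb ω} := by
        apply setLIntegral_congr_fun measurableSet_Ioi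
        intro t _
        show ENNReal.ofReal (1 - q t ^ n) = μ {ω | t < (Finset.range n).sup' hkn (fun i => X i ω)}
        rw [htailE n hkn t, ← ENNReal.ofReal_one,
          ← ENNReal.ofReal_sub 1 (pow_nonneg (hq0 t) n)]
      rw [hcongr, ← hlcb]
      exact hintb.lintegral_lt_top
  have hfs_int : IntegrableOn (fun t => 1 - q t ^ n') (Set.Ioi 0) volume := by
    apply Integrable.mono hfb_int (continuous_const.sub (hqcont.pow n')).aestronglyMeasurable
    apply ae_of_all
    intro t
    show ‖1 - q t ^ n'‖ ≤ ‖1 - q t ^ n‖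
    rw [Real.norm_eq_abs, Real.norm_eq_abs,
      abs_of_nonneg (by nlinarith [pow_le_one₀ (hq0 t) (hq1 t) (n := n')]),
      abs_of_nonneg (by nlinarith [pow_le_one₀ (hq0 t) (hq1 t) (n := n)])]
    have := pow_anti_aux (hq0 t) (hq1 t) hn
    linarith
  -- the comparison exponential
  have hHb_pos : (0:ℝ) < (harmonic n : ℝ) := by
    exact_mod_cast harmonic_pos (by omega : n ≠ 0)
  have hHs_pos : (0:ℝ) < (harmonic n' : ℝ) := by
    exact_mod_cast harmonic_pos (by omega : n' ≠ 0)
  set lam := (harmonic n : ℝ) / Ib with hlam_def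
  have hlam : 0 < lam := div_pos hHb_pos hIbpos
  have hJb : ∫ t in Set.Ioi (0:ℝ), (1 - (1 - Real.exp (-lam * t)) ^ n) = Ib := by
    rw [e_integral hlam n, hlam_def]
    field_simp
  have hJs : ∫ t in Set.Ioi (0:ℝ), (1 - (1 - Real.exp (-lam * t)) ^ n')
      = (harmonic n' : ℝ) / lam := e_integral hlam n'
  have hp_nn : ∀ t : ℝ, 0 ≤ t → 0 ≤ 1 - Real.exp (-lam * t) := by
    intro t ht
    have : Real.exp (-lam * t) ≤ 1 := by
      rw [Real.exp_le_one_iff]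
      nlinarith
    linarith
  have hpmono : ∀ a b : ℝ, a ≤ b → 1 - Real.exp (-lam * a) ≤ 1 - Real.exp (-lam * b) := by
    intro a b hab
    have : Real.exp (-lam * b) ≤ Real.exp (-lam * a) := Real.exp_le_exp.mpr (by nlinarith)
    linarith
  -- main inequality
  have hmain : (harmonic n' : ℝ) / lam ≤ Is := by
    by_cases hS : ∃ u : ℝ, 0 < u ∧ 1 - Real.exp (-lam * u) < q u
    · -- crossing case
      set T := {u : ℝ | 0 < u ∧ 1 - Real.exp (-lam * u) < q u} with hT
      have hTne : T.Nonempty := hS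
      have hbdd : BddBelow T := ⟨0, fun x hx => hx.1.le⟩
      set ts := sInf T with hts
      have hts_nn : 0 ≤ ts := le_csInf hTne (fun x hx => hx.1.le)
      have hup : ∀ t, ts < t → 1 - Real.exp (-lam * t) < q t := by
        intro t htt
        obtain ⟨s, hsT, hst⟩ := exists_lt_of_csInf_lt hTne htt
        have hcr := cross_lemma F hF0 hF1 hqmono hMHR hlam hsT.1 hst
          (by rw [hqeq s]; linarith [hsT.2])
        rw [hqeq t] at hcr
        linarith
      have hdown : ∀ t, 0 < t → t < ts → q t ≤ 1 - Real.exp (-lam * t) := by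
        intro t ht htt
        by_contra h
        push_neg at h
        have hmem : t ∈ T := ⟨ht, h⟩
        have := csInf_le hbdd hmem
        linarith
      have hts_pos : 0 < ts := by
        rcases eq_or_lt_of_le hts_nn with h0 | h
        swap
        · exact h
        exfalso
        have hall : ∀ t : ℝ, 0 < t → 1 - Real.exp (-lam * t) < q t := by
          intro t ht
          exact hup t (by rw [← h0]; exact ht)
        have hφ_int : IntegrableOn
            (fun t => (1 - (1 - Real.exp (-lam * t)) ^ n) - (1 - q t ^ n))
            (Set.Ioi 0) volume := (e_integrable hlam n).sub hfb_int
        have hint0 : ∫ t in Set.Ioi (0:ℝ),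
            ((1 - (1 - Real.exp (-lam * t)) ^ n) - (1 - q t ^ n)) = 0 := by
          rw [MeasureTheory.integral_sub (e_integrable hlam n) hfb_int, hJb, ← hIb, sub_self]
        have hpos2 : 0 < ∫ t in Set.Ioi (0:ℝ),
            ((1 - (1 - Real.exp (-lam * t)) ^ n) - (1 - q t ^ n)) := by
          rw [integral_pos_iff_support_of_nonneg_ae ?nn hφ_int]
          · have hsub : Set.Ioi (0:ℝ) ⊆ Function.support
                (fun t => (1 - (1 - Real.exp (-lam * t)) ^ n) - (1 - q t ^ n)) := by
              intro t ht
              have h1 := hall t ht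
              have h2 : (1 - Real.exp (-lam * t)) ^ n < q t ^ n :=
                pow_lt_pow_left₀ h1 (hp_nn t (le_of_lt ht)) (by omega)
              simp only [Function.mem_support]
              intro hzero
              nlinarith
            calc (0:ENNReal) < volume (Set.Ioi (0:ℝ)) := by
                  rw [Real.volume_Ioi]
                  exact ENNReal.zero_lt_top
              _ = (volume.restrict (Set.Ioi (0:ℝ))) (Set.Ioi 0) :=
                  (Measure.restrict_apply_self _ _).symm
              _ ≤ (volume.restrict (Set.Ioi (0:ℝ))) (Function.support
                  (fun t => (1 - (1 - Real.exp (-lam * t)) ^ n) - (1 - q t ^ n))) :=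
                  measure_mono hsub
          case nn =>
            filter_upwards [ae_restrict_mem measurableSet_Ioi] with t ht
            have h1 := hall t ht
            have h2 : (1 - Real.exp (-lam * t)) ^ n ≤ q t ^ n :=
              (pow_lt_pow_left₀ h1 (hp_nn t (le_of_lt ht)) (by omega)).le
            simp only [Pi.zero_apply]
            nlinarith
        linarith
      set w := 1 - Real.exp (-lam * ts) with hw_def
      have hw_pos : 0 < w := by
        have : Real.exp (-lam * ts) < 1 := by
          rw [Real.exp_lt_one_iff]
          nlinarith
        rw [hw_def]
        linarith
      have hne_ts : ∀ᵐ t : ℝ ∂volume, t ≠ ts := by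
        rw [ae_iff]
        have hset : {a : ℝ | ¬ a ≠ ts} = {ts} := by
          ext a
          simp
        rw [hset]
        exact Real.volume_singleton
      have hae : ∀ᵐ t ∂(volume.restrict (Set.Ioi (0:ℝ))),
          (n' : ℝ) * ((1 - q t ^ n) - (1 - (1 - Real.exp (-lam * t)) ^ n))
            ≤ (n : ℝ) * w ^ (n - n')
              * ((1 - q t ^ n') - (1 - (1 - Real.exp (-lam * t)) ^ n')) := by
        filter_upwards [ae_restrict_mem measurableSet_Ioi, ae_restrict_of_ae hne_ts]
          with t ht htne
        rcases lt_or_gt_of_ne htne with hlt | hgt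
        · have h1 : q t ≤ 1 - Real.exp (-lam * t) := hdown t ht hlt
          have h2 : 1 - Real.exp (-lam * t) ≤ w := hpmono t ts hlt.le
          have hkey := poly_compare hn' hn (hq0 t) h1 h2
          nlinarith [hkey]
        · have h1 : 1 - Real.exp (-lam * t) < q t := hup t hgt
          have h2 : w ≤ 1 - Real.exp (-lam * t) := hpmono ts t hgt.le
          have hkey := poly_compare2 hn' hn hw_pos.le h2 h1.le
          nlinarith [hkey]
      have hint1 : Integrable
          (fun t => (n' : ℝ) * ((1 - q t ^ n) - (1 - (1 - Real.exp (-lam * t)) ^ n)))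
          (volume.restrict (Set.Ioi (0:ℝ))) :=
        (hfb_int.sub (e_integrable hlam n)).const_mul _
      have hint2 : Integrable
          (fun t => (n : ℝ) * w ^ (n - n')
            * ((1 - q t ^ n') - (1 - (1 - Real.exp (-lam * t)) ^ n')))
          (volume.restrict (Set.Ioi (0:ℝ))) :=
        (hfs_int.sub (e_integrable hlam n')).const_mul _
      have hcomp := integral_mono_ae hint1 hint2 hae
      rw [MeasureTheory.integral_const_mul, MeasureTheory.integral_const_mul,
        MeasureTheory.integral_sub hfb_int (e_integrable hlam n),
        MeasureTheory.integral_sub hfs_int (e_integrable hlam n'), hJb, hJs, ← hIb, ← hIs,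
        sub_self, mul_zero] at hcomp
      have hfac : 0 < (n : ℝ) * w ^ (n - n') := by
        have hn0 : (0:ℝ) < (n:ℝ) := by exact_mod_cast (by omega : 0 < n)
        exact mul_pos hn0 (pow_pos hw_pos _)
      nlinarith [hcomp]
    · -- no crossing: q ≤ p everywhere on Ioi 0
      push_neg at hS
      rw [← hJs, hIs]
      apply setIntegral_mono_on (e_integrable hlam n') hfs_int measurableSet_Ioi
      intro t ht
      have h1 : q t ≤ 1 - Real.exp (-lam * t) := hS t ht
      have h2 : q t ^ n' ≤ (1 - Real.exp (-lam * t)) ^ n' :=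
        pow_le_pow_left₀ (hq0 t) h1 n'
      linarith
  -- conclusion
  have hEq1 : (∫ ω, Ms ω ∂μ) = Is := by rw [hEMs]
  have hEq2 : (∫ ω, Mb ω ∂μ) = Ib := by rw [hEMb]
  have hfinal : (harmonic n' : ℝ) / (harmonic n : ℝ) ≤ Is / Ib := by
    rw [div_le_div_iff₀ hHb_pos hIbpos]
    have hlam_val : (harmonic n' : ℝ) / lam = (harmonic n' : ℝ) * Ib / (harmonic n : ℝ) := by
      rw [hlam_def]
      field_simp
    rw [hlam_val] at hmain
    rw [div_le_iff₀ hHb_pos] at hmain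
    linarith
  show (∫ ω, Ms ω ∂μ) / (∫ ω, Mb ω ∂μ) ≥ (harmonic n' : ℝ) / (harmonic n : ℝ)
  rw [hEq1, hEq2]
  exact hfinal
end

section
/- Let X be a random variable with a continuous MHR distribution. Then P(X ≤ E[X]) ≤ 1 − 1/e. -/
open MeasureTheory Real

open Set

lemma core {S : ℝ → ℝ} (hSm : Measurable S) (hS0 : ∀ t, 0 ≤ S t) (hS1 : ∀ t, S t ≤ 1)
    {p q c k : ℝ} (hp : 0 < p) (hpq : p < q) (hc : 0 < c) (hkc : c / p ≤ k)
    (h1 : ∀ t ∈ Set.Ioc (0:ℝ) p, S t ≤ Real.exp (-(c + k * (t - p))))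
    (h2 : ∀ t ∈ Set.Ioc p q, S t ≤ Real.exp (-c))
    (h3 : ∀ t ∈ Set.Ioi q, S t ≤ Real.exp (-(c + k * (t - p)))) :
    ∫ t in Set.Ioi (0:ℝ), S t ≤ p - (c - 1) / k + (q - p) * Real.exp (-c) := by
  have hk : 0 < k := lt_of_lt_of_le (div_pos hc hp) hkc
  set t₀ : ℝ := p - c / k with ht₀def
  have hckp : c / k ≤ p := by
    rw [div_le_iff₀ hk]
    have := (div_le_iff₀ hp).mp hkc
    linarith
  have ht₀0 : 0 ≤ t₀ := by simp [ht₀def]; linarith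
  have ht₀p : t₀ < p := by
    have : 0 < c / k := div_pos hc hk
    simp [ht₀def]; linarith
  set g : ℝ → ℝ := fun t => Real.exp (-(c + k * (t - p))) with hgdef
  have hgc : Continuous g := by fun_prop
  have hgint : IntegrableOn g (Ioi q) := by
    have : IntegrableOn (fun t : ℝ => Real.exp (k * p - c) * Real.exp (-k * t)) (Ioi q) :=
      (exp_neg_integrableOn_Ioi q hk).const_mul _
    refine this.congr_fun (fun t _ => ?_) measurableSet_Ioi
    show Real.exp (k * p - c) * Real.exp (-k * t) = Real.exp (-(c + k * (t - p)))
    rw [← Real.exp_add]; congr 1; ring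
  have hSmeas : AEStronglyMeasurable S (volume.restrict (Ioi q)) := hSm.aestronglyMeasurable
  have hSintIoi : IntegrableOn S (Ioi q) := by
    refine hgint.mono' hSmeas ?_
    filter_upwards [ae_restrict_mem measurableSet_Ioi] with t ht
    rw [Real.norm_eq_abs, abs_of_nonneg (hS0 t)]
    exact h3 t ht
  have hSintIoc : ∀ a b : ℝ, IntegrableOn S (Ioc a b) := by
    intro a b
    have hc1 : IntegrableOn (fun _ : ℝ => (1:ℝ)) (Ioc a b) :=
      integrableOn_const measure_Ioc_lt_top.ne
    refine hc1.mono' hSm.aestronglyMeasurable (Filter.Eventually.of_forall fun t => ?_)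
    rw [Real.norm_eq_abs, abs_of_nonneg (hS0 t)]; exact hS1 t
  -- split
  have hsplit1 : ∫ t in Ioi (0:ℝ), S t = (∫ t in Ioc (0:ℝ) q, S t) + ∫ t in Ioi q, S t := by
    rw [← setIntegral_union (Set.Ioc_disjoint_Ioi le_rfl) measurableSet_Ioi (hSintIoc 0 q) hSintIoi,
      Set.Ioc_union_Ioi_eq_Ioi (by linarith)]
  have hsplit2 : ∫ t in Ioc (0:ℝ) q, S t = (∫ t in Ioc (0:ℝ) t₀, S t) + ∫ t in Ioc t₀ q, S t := by
    rw [← setIntegral_union (Set.Ioc_disjoint_Ioc_of_le le_rfl)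
      measurableSet_Ioc (hSintIoc 0 t₀) (hSintIoc t₀ q),
      Set.Ioc_union_Ioc_eq_Ioc ht₀0 (by linarith)]
  have hsplit3 : ∫ t in Ioc t₀ q, S t = (∫ t in Ioc t₀ p, S t) + ∫ t in Ioc p q, S t := by
    rw [← setIntegral_union (Set.Ioc_disjoint_Ioc_of_le le_rfl) measurableSet_Ioc
      (hSintIoc t₀ p) (hSintIoc p q), Set.Ioc_union_Ioc_eq_Ioc ht₀p.le hpq.le]
  -- piece A
  have hA : ∫ t in Ioc (0:ℝ) t₀, S t ≤ t₀ := by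
    calc ∫ t in Ioc (0:ℝ) t₀, S t ≤ ∫ _t in Ioc (0:ℝ) t₀, (1:ℝ) :=
          setIntegral_mono_on (hSintIoc 0 t₀) (integrableOn_const measure_Ioc_lt_top.ne)
            measurableSet_Ioc (fun t _ => hS1 t)
      _ = t₀ := by
          simp [Real.volume_Ioc, ENNReal.toReal_ofReal ht₀0, ht₀0]
  -- FTC antiderivative
  have hderiv : ∀ t : ℝ, HasDerivAt (fun t => -Real.exp (-(c + k * (t - p))) / k) (g t) t := by
    intro t
    have h1 : HasDerivAt (fun t : ℝ => -(c + k * (t - p))) (-k) t := by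
      have : HasDerivAt (fun t : ℝ => c + k * (t - p)) k t := by
        simpa using (((hasDerivAt_id t).sub_const p).const_mul k).const_add c
      exact this.neg
    have h2 := h1.exp
    have h3 : HasDerivAt (fun t => -Real.exp (-(c + k * (t - p))) / k)
        (-(Real.exp (-(c + k * (t - p))) * -k) / k) t := (h2.neg).div_const k
    convert h3 using 1
    show Real.exp (-(c + k * (t - p))) = -(Real.exp (-(c + k * (t - p))) * -k) / k
    rw [mul_neg, neg_neg, mul_div_assoc, div_self hk.ne', mul_one]
  -- piece B
  have hB : ∫ t in Ioc t₀ p, S t ≤ (1 - Real.exp (-c)) / k := by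
    have hmono : ∫ t in Ioc t₀ p, S t ≤ ∫ t in Ioc t₀ p, g t := by
      refine setIntegral_mono_on (hSintIoc t₀ p) ((hgc.continuousOn.integrableOn_compact isCompact_Icc).mono_set
        Set.Ioc_subset_Icc_self) measurableSet_Ioc (fun t ht => ?_)
      exact h1 t ⟨lt_of_le_of_lt ht₀0 ht.1, ht.2⟩
    have hcomp : ∫ t in Ioc t₀ p, g t = (1 - Real.exp (-c)) / k := by
      rw [← intervalIntegral.integral_of_le ht₀p.le]
      rw [intervalIntegral.integral_eq_sub_of_hasDerivAt (fun t _ => hderiv t)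
        (hgc.intervalIntegrable _ _)]
      have : k * (t₀ - p) = -c := by
        rw [ht₀def]; field_simp; ring
      rw [this]
      have : -(c + -c) = 0 := by ring
      rw [this, Real.exp_zero]
      ring
    linarith
  -- piece C
  have hC : ∫ t in Ioc p q, S t ≤ (q - p) * Real.exp (-c) := by
    calc ∫ t in Ioc p q, S t ≤ ∫ _t in Ioc p q, Real.exp (-c) :=
          setIntegral_mono_on (hSintIoc p q) (integrableOn_const measure_Ioc_lt_top.ne)
            measurableSet_Ioc h2
      _ = (q - p) * Real.exp (-c) := by
          simp [Real.volume_Ioc, ENNReal.toReal_ofReal (by linarith : (0:ℝ) ≤ q - p), hpq.le]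
  -- piece D
  have hD : ∫ t in Ioi q, S t ≤ Real.exp (-c) / k := by
    have hmono : ∫ t in Ioi q, S t ≤ ∫ t in Ioi q, g t :=
      setIntegral_mono_on hSintIoi hgint measurableSet_Ioi h3
    have htend : Filter.Tendsto (fun t => -Real.exp (-(c + k * (t - p))) / k)
        Filter.atTop (nhds 0) := by
      have hlin : Filter.Tendsto (fun t : ℝ => -k * t + (k * p - c)) Filter.atTop Filter.atBot :=
        Filter.tendsto_atBot_add_const_right _ _
          (Filter.tendsto_id.const_mul_atTop_of_neg (neg_neg_iff_pos.2 hk))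
      have h0 : Filter.Tendsto (fun t : ℝ => -Real.exp (-k * t + (k * p - c)) / k)
          Filter.atTop (nhds (-0 / k)) :=
        ((Real.tendsto_exp_atBot.comp hlin).neg).div_const k
      have heq : (fun t : ℝ => -Real.exp (-k * t + (k * p - c)) / k)
          = fun t => -Real.exp (-(c + k * (t - p))) / k := by
        funext t; congr 2; ring
      rw [heq] at h0; simpa using h0
    have hcomp : ∫ t in Ioi q, g t = Real.exp (-(c + k * (q - p))) / k := by
      rw [integral_Ioi_of_hasDerivAt_of_tendsto' (fun t _ => hderiv t) hgint htend]
      ring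
    have hle : Real.exp (-(c + k * (q - p))) ≤ Real.exp (-c) := by
      apply Real.exp_le_exp.mpr
      nlinarith
    rw [hcomp] at hmono
    refine hmono.trans ?_
    gcongr
    
  -- combine
  have : t₀ + (1 - Real.exp (-c)) / k + (q - p) * Real.exp (-c) + Real.exp (-c) / k
      = p - (c - 1) / k + (q - p) * Real.exp (-c) := by
    rw [ht₀def]; field_simp; ring
  rw [hsplit1, hsplit2, hsplit3]
  have h4 := add_le_add (add_le_add (add_le_add hA hB) hC) hD
  refine le_trans (le_of_eq (by ring)) (le_trans h4 (le_of_eq this))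

set_option maxHeartbeats 1000000 in
/-- Barlow–Marshall: for `X` with a continuous nonnegative MHR distribution,
`P(X ≤ E[X]) ≤ 1 - 1/e`. -/
theorem stmt8 {Ω : Type*} [MeasurableSpace Ω] (μ : Measure Ω) [IsProbabilityMeasure μ]
    (F : ℝ → ℝ) (hFcont : Continuous F)
    (hMHR : ConcaveOn ℝ {x : ℝ | F x < 1} (fun x => Real.log (1 - F x)))
    (X : Ω → ℝ) (hmeas : Measurable X)
    (hCDF : ∀ t : ℝ, μ {ω | X ω ≤ t} = ENNReal.ofReal (F t))
    (hnonneg : ∀ᵐ ω ∂μ, 0 ≤ X ω)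
    (hint : Integrable X μ) :
    μ {ω | X ω ≤ ∫ ω', X ω' ∂μ} ≤ ENNReal.ofReal (1 - (Real.exp 1)⁻¹) := by
  set m := ∫ ω', X ω' ∂μ with hm
  rw [hCDF m]
  suffices hgoal : F m ≤ 1 - (Real.exp 1)⁻¹ by exact ENNReal.ofReal_le_ofReal hgoal
  by_contra hFm
  push_neg at hFm
  have he1 : 0 < (Real.exp 1)⁻¹ := inv_pos.mpr (exp_pos 1)
  have he2 : (Real.exp 1)⁻¹ < 1 := by
    rw [inv_lt_one_iff₀]
    right
    exact Real.one_lt_exp_iff.mpr (by norm_num)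
  -- basic facts about F
  have hFle1 : ∀ t, F t ≤ 1 := by
    intro t
    have := hCDF t ▸ prob_le_one (μ := μ) (s := {ω | X ω ≤ t})
    exact ENNReal.ofReal_le_one.mp this
  have hFneg : ∀ t, t < 0 → F t ≤ 0 := by
    intro t ht
    have hz : μ {ω | X ω ≤ t} = 0 := by
      refine measure_mono_null ?_ (ae_iff.mp hnonneg)
      intro ω hω
      simp only [Set.mem_setOf_eq, not_le] at *
      linarith
    rw [hCDF t] at hz
    exact ENNReal.ofReal_eq_zero.mp hz
  have hF0 : F 0 ≤ 0 := by
    have htend : Filter.Tendsto F (nhdsWithin 0 (Iio 0)) (nhds (F 0)) :=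
      (hFcont.tendsto 0).mono_left nhdsWithin_le_nhds
    refine le_of_tendsto htend ?_
    filter_upwards [self_mem_nhdsWithin] with x hx
    exact hFneg x hx
  have hm0 : 0 ≤ m := integral_nonneg_of_ae hnonneg
  have hmpos : 0 < m := by
    rcases hm0.lt_or_eq with h | h
    · exact h
    · exfalso; rw [← h] at hFm; linarith
  -- find p
  obtain ⟨p, hp0, hpm, hpgt, hplt⟩ :
      ∃ p : ℝ, 0 < p ∧ p ≤ m ∧ 1 - (Real.exp 1)⁻¹ < F p ∧ F p < 1 := by
    by_cases hFm1 : F m < 1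
    · exact ⟨m, hmpos, le_rfl, hFm, hFm1⟩
    · have hFm1' : F m = 1 := le_antisymm (hFle1 m) (not_lt.mp hFm1)
      have hy : (1 - (Real.exp 1)⁻¹ / 2 : ℝ) ∈ Icc (F 0) (F m) := by
        constructor <;> [linarith; linarith]
      obtain ⟨p, hpmem, hFp⟩ := intermediate_value_Icc hm0 hFcont.continuousOn hy
      have hp0 : p ≠ 0 := by
        intro h; rw [h] at hFp; linarith
      exact ⟨p, lt_of_le_of_ne hpmem.1 (Ne.symm hp0), hpmem.2, by linarith, by linarith⟩
  -- the interval where F < 1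
  set I := {x : ℝ | F x < 1} with hI
  have hIopen : IsOpen I := isOpen_lt hFcont continuous_const
  have hIconv : Convex ℝ I := hMHR.1
  have h0I : (0:ℝ) ∈ I := by simp only [hI, Set.mem_setOf_eq]; linarith
  have hpI : p ∈ I := hplt
  have hIcc : ∀ a b : ℝ, a ∈ I → b ∈ I → Icc a b ⊆ I := fun a b ha hb =>
    hIconv.ordConnected.out ha hb
  -- H is convex
  set H : ℝ → ℝ := fun x => -Real.log (1 - F x) with hH
  have hHconv : ConvexOn ℝ I H := hMHR.neg
  set c := H p with hc
  have hFp0 : 0 < F p := by linarith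
  have hc1 : 1 < c := by
    have hlog : Real.log (1 - F p) < -1 := by
      have h1 : (0:ℝ) < 1 - F p := by linarith
      have h2 : 1 - F p < (Real.exp 1)⁻¹ := by linarith
      calc Real.log (1 - F p) < Real.log (Real.exp 1)⁻¹ := Real.log_lt_log h1 h2
        _ = -1 := by rw [Real.log_inv, Real.log_exp]
    simp only [hc, hH]; linarith
  have hcpos : 0 < c := by linarith
  have hH0 : H 0 ≤ 0 := by
    simp only [hH]
    have : (0:ℝ) ≤ Real.log (1 - F 0) := Real.log_nonneg (by linarith)
    linarith
  -- find q̄ > p inside I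
  obtain ⟨ε, hε, hball⟩ := Metric.isOpen_iff.mp hIopen p hpI
  set qb := p + ε / 2 with hqb
  have hqbI : qb ∈ I := by
    apply hball
    simp only [hqb, Metric.mem_ball, Real.dist_eq]
    rw [abs_of_nonneg (by linarith)]
    linarith
  have hpqb : p < qb := by simp only [hqb]; linarith
  set K := (H qb - H p) / (qb - p) with hK
  -- c/p ≤ slope from p to any point ≥ via 0
  have hslope0 : (H 0 - H p) / (0 - p) = (c - H 0) / p := by
    rw [hc]
    field_simp [hp0.ne']
    ring
  have hcpK : c / p ≤ K := by
    have := hHconv.secant_mono hpI h0I hqbI (by linarith) (by linarith) (by linarith)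
    rw [hslope0] at this
    have h2 : c / p ≤ (c - H 0) / p := by
      gcongr
      linarith
    linarith
  have hKpos : 0 < K := lt_of_lt_of_le (div_pos hcpos hp0) hcpK
  -- choose q
  set B := (c - 1) * Real.exp c / (2 * K) with hB
  have hBpos : 0 < B := by
    apply div_pos
    · exact mul_pos (by linarith) (exp_pos c)
    · linarith
  set q := min qb (p + B) with hq
  have hpq : p < q := lt_min hpqb (by linarith)
  have hqqb : q ≤ qb := min_le_left _ _
  have hqI : q ∈ I := hIcc p qb hpI hqbI ⟨hpq.le, hqqb⟩
  set k := (H q - H p) / (q - p) with hk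
  have hkK : k ≤ K :=
    hHconv.secant_mono hpI hqI hqbI (by linarith) (by linarith) hqqb
  have hcpk : c / p ≤ k := by
    have := hHconv.secant_mono hpI h0I hqI (by linarith) (by linarith) (by linarith)
    rw [hslope0] at this
    have h2 : c / p ≤ (c - H 0) / p := by
      gcongr
      linarith
    linarith
  have hkpos : 0 < k := lt_of_lt_of_le (div_pos hcpos hp0) hcpk
  -- survival function
  set S : ℝ → ℝ := fun t => (μ {ω | t < X ω}).toReal with hS
  have hanti : Antitone S := by
    intro s t hst
    exact ENNReal.toReal_mono (measure_ne_top μ _)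
      (measure_mono (fun ω hω => lt_of_le_of_lt hst hω))
  have hSm : Measurable S := hanti.measurable
  have hSF : ∀ t, S t = 1 - max (F t) 0 := by
    intro t
    have hcompl : {ω | t < X ω} = {ω | X ω ≤ t}ᶜ := by
      ext ω; simp [not_le]
    have hmeas' : MeasurableSet {ω | X ω ≤ t} := hmeas measurableSet_Iic
    have : μ {ω | t < X ω} = 1 - μ {ω | X ω ≤ t} := by
      rw [hcompl, prob_compl_eq_one_sub hmeas']
    rw [hS]
    simp only
    rw [this, hCDF t, ENNReal.toReal_sub_of_le (ENNReal.ofReal_le_one.mpr (hFle1 t))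
      ENNReal.one_ne_top, ENNReal.toReal_one, ENNReal.toReal_ofReal']
  have hS0 : ∀ t, 0 ≤ S t := fun t => ENNReal.toReal_nonneg
  have hS1 : ∀ t, S t ≤ 1 := by
    intro t
    rw [hSF t]
    have := le_max_right (F t) 0
    linarith
  have hSH : ∀ t, t ∈ I → S t ≤ Real.exp (-(H t)) := by
    intro t ht
    have h1 : (0:ℝ) < 1 - F t := by simp only [hI, Set.mem_setOf_eq] at ht; linarith
    have h2 : Real.exp (-(H t)) = 1 - F t := by
      simp only [hH, neg_neg]
      exact Real.exp_log h1
    rw [hSF t, h2]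
    have := le_max_left (F t) 0
    linarith
  have hSp : S p = Real.exp (-c) := by
    rw [hSF p, max_eq_left hFp0.le]
    simp only [hc, hH, neg_neg]
    rw [Real.exp_log (by linarith)]
  -- the three pointwise bounds
  have h1 : ∀ t ∈ Set.Ioc (0:ℝ) p, S t ≤ Real.exp (-(c + k * (t - p))) := by
    intro t ht
    have htI : t ∈ I := hIcc 0 p h0I hpI ⟨ht.1.le, ht.2⟩
    rcases eq_or_lt_of_le ht.2 with rfl | htp
    · rw [hSp]; simp
    · have hsec := hHconv.secant_mono hpI htI hqI (by linarith) (by linarith) (by linarith)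
      rw [show (H q - H p) / (q - p) = k from rfl] at hsec
      have htp' : t - p < 0 := by linarith
      have : k * (t - p) ≤ H t - H p := (div_le_iff_of_neg htp').mp hsec
      refine (hSH t htI).trans (Real.exp_le_exp.mpr ?_)
      simp only [hc] at *
      linarith
  have h2 : ∀ t ∈ Set.Ioc p q, S t ≤ Real.exp (-c) := by
    intro t ht
    calc S t ≤ S p := hanti ht.1.le
      _ = Real.exp (-c) := hSp
  have h3 : ∀ t ∈ Set.Ioi q, S t ≤ Real.exp (-(c + k * (t - p))) := by
    intro t ht
    by_cases htI : t ∈ I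
    · have htp0 : p < t := lt_trans hpq ht.out
      have hsec := hHconv.secant_mono hpI hqI htI (ne_of_gt hpq) (ne_of_gt htp0)
        (le_of_lt ht)
      rw [show (H q - H p) / (q - p) = k from rfl] at hsec
      have htp' : 0 < t - p := by have := ht.out; linarith
      have : k * (t - p) ≤ H t - H p := (le_div_iff₀ htp').mp hsec
      refine (hSH t htI).trans (Real.exp_le_exp.mpr ?_)
      simp only [hc] at *
      linarith
    · have hFt : F t = 1 := by
        simp only [hI, Set.mem_setOf_eq, not_lt] at htI
        exact le_antisymm (hFle1 t) htI
      rw [hSF t, hFt]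
      simp [Real.exp_pos _ |>.le]
  -- layercake
  have hlayer : m = ∫ t in Set.Ioi (0:ℝ), S t := by
    rw [hm, hint.integral_eq_integral_meas_lt hnonneg]; rfl
  have hcore := core hSm hS0 hS1 hp0 hpq hcpos hcpk h1 h2 h3
  rw [← hlayer] at hcore
  -- final arithmetic
  have hqB : q - p ≤ B := by
    have hqle : q ≤ p + B := by rw [hq]; exact min_le_right _ _
    linarith
  have hBexp : B * Real.exp (-c) = (c - 1) / (2 * K) := by
    have hcc : Real.exp c * Real.exp (-c) = 1 := by rw [← Real.exp_add]; simp
    calc B * Real.exp (-c) = (c - 1) * (Real.exp c * Real.exp (-c)) / (2 * K) := by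
          rw [hB]; ring
      _ = (c - 1) / (2 * K) := by rw [hcc, mul_one]
  have hqpe : (q - p) * Real.exp (-c) ≤ (c - 1) / (2 * K) := by
    rw [← hBexp]
    exact mul_le_mul_of_nonneg_right hqB (exp_pos _).le
  have hdiv : (c - 1) / K ≤ (c - 1) / k :=
    div_le_div_of_nonneg_left (by linarith) hkpos hkK
  have hKdiv : 0 < (c - 1) / (2 * K) := div_pos (by linarith) (by linarith)
  have : m ≤ p - (c - 1) / K + (c - 1) / (2 * K) := by
    calc m ≤ p - (c - 1) / k + (q - p) * Real.exp (-c) := hcore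
      _ ≤ p - (c - 1) / K + (c - 1) / (2 * K) := by linarith
  have hfin : (c - 1) / (2 * K) < (c - 1) / K := by
    rw [div_lt_div_iff₀ (by linarith) (by linarith)]
    nlinarith [hc1, hKpos]
  linarith
end

section
/- Define p^(n) = 0 and p^(i) = E[max{v, p^(i+1)}] for i < n, where v ∼ Exp(1). Then for all 2 ≤ k ≤ n, p^(n−k) ≤ H_k − 1/8. -/
open MeasureTheory Real ProbabilityTheory

open Set
open scoped ENNReal NNReal

lemma aux_Ioi (c : ℝ) (hc : 0 ≤ c) :
    ∫ x in Ioi c, x * rexp (-x) = (c + 1) * rexp (-c) := by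
  have hderiv : ∀ x ∈ Ici c, HasDerivAt (fun y => -(y + 1) * rexp (-y)) (x * rexp (-x)) x := by
    intro x _
    have h1 : HasDerivAt (fun y : ℝ => -(y + 1)) (-1) x := (((hasDerivAt_id x).add_const 1)).neg
    have h2 : HasDerivAt (fun y : ℝ => rexp (-y)) (rexp (-x) * (-1)) x :=
      ((hasDerivAt_id x).neg).exp
    have : HasDerivAt (fun y => -(y + 1) * rexp (-y)) _ x := h1.mul h2
    convert this using 1
    ring
  have hnn : ∀ x ∈ Ioi c, 0 ≤ x * rexp (-x) := fun x hx =>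
    mul_nonneg (le_trans hc (le_of_lt hx)) (exp_nonneg _)
  have htend : Filter.Tendsto (fun y => -(y + 1) * rexp (-y)) Filter.atTop (nhds 0) := by
    have h1 := Real.tendsto_pow_mul_exp_neg_atTop_nhds_zero 1
    have h2 := Real.tendsto_exp_neg_atTop_nhds_zero
    have := (h1.add h2).neg
    simp only [neg_zero, add_zero, pow_one] at this
    convert this using 2 with x
    ring
  have := integral_Ioi_of_hasDerivAt_of_nonneg' hderiv hnn htend
  rw [this]
  ring

lemma key {c : ℝ} (hc : 0 ≤ c) :
    ∫ x, max x c ∂(expMeasure 1) = c + rexp (-c) := by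
  have h1 : expMeasure 1
      = volume.withDensity (fun x => ((exponentialPDFReal 1 x).toNNReal : ℝ≥0∞)) := rfl
  rw [h1, integral_withDensity_eq_integral_smul (measurable_exponentialPDFReal 1).real_toNNReal]
  have h2 : (fun x => (exponentialPDFReal 1 x).toNNReal • max x c)
      = Set.indicator (Ici 0) (fun x => rexp (-x) * max x c) := by
    funext x
    rw [Set.indicator_apply]
    by_cases hx : (0:ℝ) ≤ x
    · rw [if_pos (mem_Ici.mpr hx)]
      have he : exponentialPDFReal 1 x = rexp (-x) := by
        simp [exponentialPDFReal, gammaPDFReal, if_pos hx, Real.Gamma_one]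
      rw [he, NNReal.smul_def, Real.coe_toNNReal _ (by positivity)]
      rfl
    · rw [if_neg (fun h => hx (mem_Ici.mp h))]
      have he : exponentialPDFReal 1 x = 0 := by
        simp [exponentialPDFReal, gammaPDFReal, if_neg hx]
      rw [he]
      simp
  rw [h2, integral_indicator measurableSet_Ici, integral_Ici_eq_integral_Ioi]
  have hI1 : IntegrableOn (fun x => rexp (-x) * max x c) (Ioc 0 c) :=
    (((Real.continuous_exp.comp continuous_neg).mul
      (continuous_id.max continuous_const))).integrableOn_Ioc
  have hI2 : IntegrableOn (fun x => rexp (-x) * max x c) (Ioi c) := by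
    have : IntegrableOn (fun x => x * rexp (-x)) (Ioi c) := by
      have hderiv : ∀ x ∈ Ici c, HasDerivAt (fun y => -(y + 1) * rexp (-y)) (x * rexp (-x)) x := by
        intro x _
        have h1 : HasDerivAt (fun y : ℝ => -(y + 1)) (-1) x := (((hasDerivAt_id x).add_const 1)).neg
        have h2 : HasDerivAt (fun y : ℝ => rexp (-y)) (rexp (-x) * (-1)) x :=
          ((hasDerivAt_id x).neg).exp
        have : HasDerivAt (fun y => -(y + 1) * rexp (-y)) _ x := h1.mul h2
        convert this using 1
        ring
      have hnn : ∀ x ∈ Ioi c, 0 ≤ x * rexp (-x) := fun x hx =>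
        mul_nonneg (le_trans hc (le_of_lt hx)) (exp_nonneg _)
      have htend : Filter.Tendsto (fun y => -(y + 1) * rexp (-y)) Filter.atTop (nhds 0) := by
        have h1 := Real.tendsto_pow_mul_exp_neg_atTop_nhds_zero 1
        have h2 := Real.tendsto_exp_neg_atTop_nhds_zero
        have := (h1.add h2).neg
        simp only [neg_zero, add_zero, pow_one] at this
        convert this using 2 with x
        ring
      exact integrableOn_Ioi_deriv_of_nonneg' hderiv hnn htend
    apply this.congr_fun ?_ measurableSet_Ioi
    intro x hx
    show x * rexp (-x) = rexp (-x) * max x c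
    rw [max_eq_left (le_of_lt hx)]
    ring
  have hsplit : ∫ x in Ioi (0:ℝ), rexp (-x) * max x c
      = (∫ x in Ioc 0 c, rexp (-x) * max x c) + ∫ x in Ioi c, rexp (-x) * max x c := by
    rw [← setIntegral_union (Ioc_disjoint_Ioi le_rfl) measurableSet_Ioi hI1 hI2,
      Ioc_union_Ioi_eq_Ioi hc]
  rw [hsplit]
  have hA : ∫ x in Ioc 0 c, rexp (-x) * max x c = c * (1 - rexp (-c)) := by
    have : ∫ x in Ioc 0 c, rexp (-x) * max x c = ∫ x in Ioc 0 c, rexp (-x) * c := by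
      apply setIntegral_congr_fun measurableSet_Ioc
      intro x hx
      show rexp (-x) * max x c = rexp (-x) * c
      rw [max_eq_right hx.2]
    rw [this, ← intervalIntegral.integral_of_le hc, intervalIntegral.integral_mul_const,
      intervalIntegral.integral_comp_neg (fun x => rexp x), integral_exp]
    simp [mul_comm]
  have hB : ∫ x in Ioi c, rexp (-x) * max x c = (c + 1) * rexp (-c) := by
    rw [setIntegral_congr_fun measurableSet_Ioi (fun x hx => by
      show rexp (-x) * max x c = x * rexp (-x)
      rw [max_eq_left (le_of_lt hx)]; ring : EqOn (fun x => rexp (-x) * max x c)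
        (fun x => x * rexp (-x)) (Ioi c)), aux_Ioi c hc]
  rw [hA, hB]
  ring

lemma mono_step {a b : ℝ} (ha : 0 ≤ a) (hab : a ≤ b) : a + rexp (-a) ≤ b + rexp (-b) := by
  have h1 : rexp (-a) ≤ 1 := Real.exp_le_one_iff.mpr (by linarith)
  have h2 : rexp (-b) = rexp (-a) * rexp (a - b) := by
    rw [← Real.exp_add]; ring_nf
  have h3 := Real.add_one_le_exp (a - b)
  have h4 := Real.exp_pos (-a)
  nlinarith

lemma harm_lb (k : ℕ) (hk : 2 ≤ k) : Real.log (k + 1) + 1 / 8 ≤ (harmonic k : ℝ) := by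
  have h := Real.strictMono_eulerMascheroniSeq.monotone hk
  have h2 : Real.eulerMascheroniSeq 2 = 3 / 2 - Real.log 3 := by
    rw [Real.eulerMascheroniSeq]
    norm_num [harmonic_succ, harmonic_zero]
  have hlog : Real.log 3 ≤ 11 / 8 := by
    rw [Real.log_le_iff_le_exp (by norm_num)]
    have e1 : (2.7182818283 : ℝ) < rexp 1 := Real.exp_one_gt_d9
    have e2 : (1 + 3 / 8 : ℝ) ≤ rexp (3 / 8) := by nlinarith [Real.add_one_le_exp (3/8 : ℝ)]
    have : rexp (11 / 8 : ℝ) = rexp 1 * rexp (3 / 8) := by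
      rw [← Real.exp_add]; norm_num
    nlinarith [Real.exp_pos (1:ℝ)]
  rw [Real.eulerMascheroniSeq, Real.eulerMascheroniSeq] at h
  have hH2 : (harmonic 2 : ℝ) = 3 / 2 := by norm_num [harmonic_succ, harmonic_zero]
  have hc : ((2:ℕ):ℝ) + 1 = 3 := by norm_num
  rw [hH2, hc] at h
  linarith

/-- With `p^(n) = 0` and `p^(i) = E[max{v, p^(i+1)}]` for `v ∼ Exp(1)`, we have
`p^(n-k) ≤ H_k - 1/8` for all `2 ≤ k ≤ n`. -/
theorem stmt10 (n : ℕ) (p : ℕ → ℝ)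
    (hpn : p n = 0)
    (hrec : ∀ i < n, p i = ∫ x, max x (p (i + 1)) ∂(expMeasure 1)) :
    ∀ k, 2 ≤ k → k ≤ n → p (n - k) ≤ (harmonic k : ℝ) - 1 / 8 := by
  have hstep : ∀ j, j + 1 ≤ n → 0 ≤ p (n - j) →
      p (n - (j + 1)) = p (n - j) + rexp (-(p (n - j))) := by
    intro j hj h0
    rw [hrec _ (by omega), show n - (j + 1) + 1 = n - j by omega, key h0]
  have hnn : ∀ j, j ≤ n → 0 ≤ p (n - j) := by
    intro j
    induction j with
    | zero => intro _; simp [hpn]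
    | succ j ih =>
      intro hj
      have h0 := ih (by omega)
      rw [hstep j hj h0]
      exact add_nonneg h0 (Real.exp_nonneg _)
  intro k hk2
  induction k, hk2 using Nat.le_induction with
  | base =>
    intro h2n
    have h1 : p (n - 1) = 1 := by
      rw [hstep 0 (by omega) (by rw [Nat.sub_zero, hpn]), Nat.sub_zero, hpn]
      simp
    have h2 : p (n - 2) = 1 + rexp (-1) := by
      rw [show (2:ℕ) = 1 + 1 from rfl, hstep 1 (by omega) (by rw [h1]; norm_num), h1]
    have hm : rexp (-1) * rexp 1 = 1 := by rw [← Real.exp_add]; norm_num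
    have hH : (harmonic 2 : ℝ) = 3 / 2 := by norm_num [harmonic_succ, harmonic_zero]
    rw [h2, hH]
    nlinarith [Real.exp_one_gt_d9, Real.exp_pos (-1:ℝ)]
  | succ k hk ih =>
    intro hkn
    have hb := ih (by omega)
    have ha := hnn k (by omega)
    rw [hstep k hkn ha]
    have hmono := mono_step ha hb
    have hexp : rexp (-((harmonic k : ℝ) - 1 / 8)) ≤ 1 / (k + 1) := by
      have hl := harm_lb k hk
      have h1 : rexp (-((harmonic k : ℝ) - 1 / 8)) ≤ rexp (-Real.log ((k:ℝ) + 1)) :=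
        Real.exp_le_exp.mpr (by linarith)
      have h2 : rexp (-Real.log ((k:ℝ) + 1)) = 1 / ((k:ℝ) + 1) := by
        rw [Real.exp_neg, Real.exp_log (by positivity), one_div]
      linarith
    have hH : (harmonic (k + 1) : ℝ) = (harmonic k : ℝ) + 1 / (k + 1) := by
      rw [harmonic_succ]
      push_cast
      ring
    rw [hH]
    linarith
end

section
/- For all sufficiently large n (e.g., n ≥ e^{e^{e^4}}) and every p ≥ 0, (p + 1)(1 − (1 − e^{−p})^n) ≤ H_n − c·log log log n for some universal constant c > 0. Consequently, no static-price single-item mechanism with i.i.d. Exp(1) values achieves competitive ratio better than 1 − Ω(log log log n / log n) relative to E[max_i v_i] = H_n. -/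
open Real

/-- `e^{-2x} ≤ 1 - x` for `x ∈ [0, 1/2]`. -/
lemma aux_exp_half (x : ℝ) (hx0 : 0 ≤ x) (hx : x ≤ 1/2) :
    Real.exp (-(2*x)) ≤ 1 - x := by
  have h1 : 1 + 2*x ≤ Real.exp (2*x) := by
    have := Real.add_one_le_exp (2*x); linarith
  have h2 : Real.exp (-(2*x)) * Real.exp (2*x) = 1 := by
    rw [← Real.exp_add]; simp
  nlinarith [Real.exp_pos (-(2*x)), Real.exp_pos (2*x)]

/-- Key numeric lemma: for `b ≥ e^4`, `log log b ≤ b - 2e√b - 1`. -/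
lemma keyK (b : ℝ) (hb : Real.exp 4 ≤ b) :
    Real.log (Real.log b) ≤ b - 2 * Real.exp 1 * Real.sqrt b - 1 := by
  have he1 := Real.exp_one_gt_d9
  have he2 := Real.exp_one_lt_d9
  have hexp2 : Real.exp 2 = Real.exp 1 ^ 2 := (Real.exp_one_pow 2).symm
  have hexp4 : Real.exp 4 = Real.exp 1 ^ 4 := (Real.exp_one_pow 4).symm
  have h54 : (54:ℝ) ≤ Real.exp 4 := by
    have h := pow_le_pow_left₀ (by norm_num : (0:ℝ) ≤ 2.7182818283) he1.le 4
    rw [← hexp4] at h; norm_num at h; linarith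
  have hb54 : (54:ℝ) ≤ b := le_trans h54 hb
  have bpos : (0:ℝ) < b := by linarith
  set y := Real.sqrt b with hy
  set z := Real.sqrt y with hz
  have hy2 : y ^ 2 = b := Real.sq_sqrt bpos.le
  have hynn : 0 ≤ y := Real.sqrt_nonneg b
  have hz2 : z ^ 2 = y := Real.sq_sqrt hynn
  have hznn : 0 ≤ z := Real.sqrt_nonneg y
  have hyge : Real.exp 1 ^ 2 ≤ y := by
    have : Real.sqrt (Real.exp 4) ≤ y := Real.sqrt_le_sqrt hb
    rwa [hexp4, show Real.exp 1 ^ 4 = (Real.exp 1 ^ 2) ^ 2 by ring,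
      Real.sqrt_sq (by positivity)] at this
  have hzge : Real.exp 1 ≤ z := by
    have : Real.sqrt (Real.exp 1 ^ 2) ≤ z := Real.sqrt_le_sqrt hyge
    rwa [Real.sqrt_sq (Real.exp_pos 1).le] at this
  have hlogb_pos : 0 < Real.log b := Real.log_pos (by linarith)
  -- log b ≤ 2y - 2
  have hlogb : Real.log b ≤ 2*y - 2 := by
    have h := Real.log_le_sub_one_of_pos (show (0:ℝ) < y by positivity)
    have hls : Real.log y = Real.log b / 2 := Real.log_sqrt bpos.le
    rw [hls] at h; linarith
  -- log log b ≤ 2 √(log b) - 2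
  have hloglogb : Real.log (Real.log b) ≤ 2 * Real.sqrt (Real.log b) - 2 := by
    have h := Real.log_le_sub_one_of_pos
      (show (0:ℝ) < Real.sqrt (Real.log b) by positivity)
    have hls : Real.log (Real.sqrt (Real.log b)) = Real.log (Real.log b) / 2 :=
      Real.log_sqrt hlogb_pos.le
    rw [hls] at h; linarith
  -- √(log b) ≤ √2 * z
  have hsq : Real.sqrt (Real.log b) ≤ Real.sqrt 2 * z := by
    have h1 : Real.log b ≤ 2 * y := by linarith
    have := Real.sqrt_le_sqrt h1
    rwa [Real.sqrt_mul (by norm_num) y] at this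
  have hsqrt2 : Real.sqrt 2 ≤ 1.5 := by
    nlinarith [Real.sq_sqrt (show (0:ℝ) ≤ 2 by norm_num), Real.sqrt_nonneg 2]
  have hchain : Real.log (Real.log b) ≤ 3 * z - 2 := by
    have : Real.sqrt (Real.log b) ≤ 1.5 * z := by
      calc Real.sqrt (Real.log b) ≤ Real.sqrt 2 * z := hsq
        _ ≤ 1.5 * z := by nlinarith
    linarith
  -- final polynomial inequality: z^4 - 2 e z^2 - 3 z + 1 ≥ 0 for z ≥ e
  have hfinal : 3 * z - 2 ≤ b - 2 * Real.exp 1 * y - 1 := by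
    have hb_z : b = z ^ 4 := by rw [← hy2, ← hz2]; ring
    have hy_z : y = z ^ 2 := hz2.symm
    rw [hb_z, hy_z]
    nlinarith [sq_nonneg z, sq_nonneg (z - 3), mul_pos (Real.exp_pos 1) (Real.exp_pos 1)]
  linarith

set_option maxHeartbeats 1000000 in
/-- There is a universal constant `c > 0` such that for all `n ≥ e^{e^{e^4}}` and all
static prices `p ≥ 0`, `(p+1)(1 - (1 - e^{-p})^n) ≤ H_n - c log log log n`; hence no
static-price mechanism for i.i.d. `Exp(1)` values beats `1 - Ω(log log log n / log n)`
relative to `E[max_i v_i] = H_n`. -/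
theorem stmt13 :
    ∃ c : ℝ, 0 < c ∧ ∀ n : ℕ, Real.exp (Real.exp (Real.exp 4)) ≤ (n : ℝ) →
      ∀ p : ℝ, 0 ≤ p →
        (p + 1) * (1 - (1 - Real.exp (-p)) ^ n)
          ≤ (harmonic n : ℝ) - c * Real.log (Real.log (Real.log n)) := by
  refine ⟨1/2, by norm_num, ?_⟩
  intro n hn p hp
  have he1 := Real.exp_one_gt_d9
  have he2 := Real.exp_one_lt_d9
  have hexp4 : Real.exp 4 = Real.exp 1 ^ 4 := (Real.exp_one_pow 4).symm
  have h54 : (54:ℝ) ≤ Real.exp 4 := by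
    have h := pow_le_pow_left₀ (by norm_num : (0:ℝ) ≤ 2.7182818283) he1.le 4
    rw [← hexp4] at h; norm_num at h; linarith
  have npos : (0:ℝ) < n := lt_of_lt_of_le (Real.exp_pos _) hn
  set a := Real.log (n:ℝ) with ha
  set b := Real.log a with hb
  set L := Real.log b with hL
  have ha_ge : Real.exp (Real.exp 4) ≤ a := by
    rw [ha, show Real.exp (Real.exp 4) = Real.log (Real.exp (Real.exp (Real.exp 4))) from
      (Real.log_exp _).symm]
    exact Real.log_le_log (Real.exp_pos _) hn
  have apos : (0:ℝ) < a := lt_of_lt_of_le (Real.exp_pos _) ha_ge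
  have hb4 : Real.exp 4 ≤ b := by
    rw [hb, show Real.exp 4 = Real.log (Real.exp (Real.exp 4)) from (Real.log_exp _).symm]
    exact Real.log_le_log (Real.exp_pos _) ha_ge
  have hb54 : (54:ℝ) ≤ b := le_trans h54 hb4
  have bpos : (0:ℝ) < b := by linarith
  have hL4 : (4:ℝ) ≤ L := by
    rw [hL, show (4:ℝ) = Real.log (Real.exp 4) from (Real.log_exp _).symm]
    exact Real.log_le_log (Real.exp_pos _) hb4
  have hLpos : (0:ℝ) < L := by linarith
  have hLb : L ≤ b - 1 := Real.log_le_sub_one_of_pos bpos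
  have hba : b ≤ a - 1 := Real.log_le_sub_one_of_pos apos
  have hLa : L ≤ a := by linarith
  have ha54 : (54:ℝ) ≤ a := by linarith
  have hna : Real.exp a = (n:ℝ) := Real.exp_log npos
  have hab : Real.exp b = a := Real.exp_log apos
  have hbL : Real.exp L = b := Real.exp_log bpos
  -- harmonic bound
  have hH : a ≤ (harmonic n : ℝ) := by
    have h1 := log_add_one_le_harmonic n
    push_cast at h1
    have h2 : a ≤ Real.log ((n:ℝ) + 1) := Real.log_le_log npos (by linarith)
    linarith
  -- basic facts about x = e^{-p}
  have hx0 : (0:ℝ) < Real.exp (-p) := Real.exp_pos _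
  have hx1 : Real.exp (-p) ≤ 1 := Real.exp_le_one_iff.mpr (by linarith)
  have hq0 : (0:ℝ) ≤ (1 - Real.exp (-p)) ^ n := pow_nonneg (by linarith) n
  -- main claim
  have key : (p + 1) * (1 - (1 - Real.exp (-p)) ^ n) ≤ a - L/2 := by
    rcases le_or_gt p (a - L/2 - 1) with h1 | h1
    · -- small price
      have hq1 : (1 - Real.exp (-p)) ^ n ≤ 1 := pow_le_one₀ (by linarith) (by linarith)
      nlinarith
    · rcases le_or_gt (a + 1) p with h2 | h2
      · -- large price: Bernoulli
        have hber : 1 + (n:ℝ) * (-Real.exp (-p)) ≤ (1 + -Real.exp (-p)) ^ n :=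
          one_add_mul_le_pow (by linarith) n
        have hstep : (p + 1) * (1 - (1 - Real.exp (-p)) ^ n)
            ≤ (p + 1) * ((n:ℝ) * Real.exp (-p)) := by
          apply mul_le_mul_of_nonneg_left _ (by linarith)
          have : (1 + -Real.exp (-p)) ^ n = (1 - Real.exp (-p)) ^ n := by ring_nf
          rw [this] at hber; linarith
        have hnx : (n:ℝ) * Real.exp (-p) = Real.exp (a - p) := by
          rw [← hna, ← Real.exp_add, ← sub_eq_add_neg]
        set u := p - (a + 1) with hu
        have hu0 : 0 ≤ u := by linarith
        have hap : a - p = -1 - u := by rw [hu]; ring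
        have heu : Real.exp (a - p) = Real.exp (-1) * Real.exp (-u) := by
          rw [hap, show (-1 : ℝ) - u = -1 + -u by ring, Real.exp_add]
        have hforms : (p + 1) * ((n:ℝ) * Real.exp (-p))
            = (a + 2) * Real.exp (-1) * Real.exp (-u)
              + Real.exp (-1) * (u * Real.exp (-u)) := by
          rw [hnx, heu]; rw [show p + 1 = a + 2 + u by rw [hu]; ring]; ring
        have hue : u * Real.exp (-u) ≤ Real.exp (-1) := by
          have h3 : u ≤ Real.exp (u - 1) := by
            have := Real.add_one_le_exp (u - 1); linarith
          have h4 : Real.exp (u - 1) * Real.exp (-u) = Real.exp (-1) := by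
            rw [← Real.exp_add]; exact congrArg Real.exp (by ring)
          calc u * Real.exp (-u) ≤ Real.exp (u-1) * Real.exp (-u) :=
                mul_le_mul_of_nonneg_right h3 (Real.exp_pos _).le
            _ = Real.exp (-1) := h4
        have hemu : Real.exp (-u) ≤ 1 := Real.exp_le_one_iff.mpr (by linarith)
        have hem1 : Real.exp (-1:ℝ) ≤ 0.37 := by
          have h5 : Real.exp (-1:ℝ) * Real.exp 1 = 1 := by
            rw [← Real.exp_add]; norm_num
          nlinarith [Real.exp_pos (-1:ℝ)]
        have hbound : (p + 1) * ((n:ℝ) * Real.exp (-p))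
            ≤ (a + 2) * Real.exp (-1) + Real.exp (-1) * Real.exp (-1) := by
          rw [hforms]
          have hA : (a + 2) * Real.exp (-1) * Real.exp (-u) ≤ (a + 2) * Real.exp (-1) := by
            have hpos : (0:ℝ) ≤ (a + 2) * Real.exp (-1) :=
              mul_nonneg (by linarith) (Real.exp_pos _).le
            have := mul_le_mul_of_nonneg_left hemu hpos
            linarith
          have hB : Real.exp (-1) * (u * Real.exp (-u)) ≤ Real.exp (-1) * Real.exp (-1) :=
            mul_le_mul_of_nonneg_left hue (Real.exp_pos _).le
          linarith
        have : (a + 2) * Real.exp (-1) + Real.exp (-1) * Real.exp (-1) ≤ a - L/2 := by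
          nlinarith [Real.exp_pos (-1:ℝ)]
        linarith
      · -- middle range : a - L/2 - 1 < p < a + 1
        have hx_half : Real.exp (-p) ≤ 1/2 := by
          have hlog2 : Real.log 2 ≤ 1 := by
            have := Real.log_le_sub_one_of_pos (show (0:ℝ) < 2 by norm_num); linarith
          have h6 : Real.exp (-p) ≤ Real.exp (-Real.log 2) :=
            Real.exp_le_exp.mpr (by linarith)
          have h7 : Real.exp (-Real.log 2) = 1/2 := by
            rw [Real.exp_neg, Real.exp_log (by norm_num : (0:ℝ) < 2)]; norm_num
          linarith
        have hpow : Real.exp (-(2 * Real.exp (-p))) ^ n ≤ (1 - Real.exp (-p)) ^ n :=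
          pow_le_pow_left₀ (Real.exp_pos _).le (aux_exp_half _ hx0.le hx_half) n
        have hnx : (n:ℝ) * Real.exp (-p) = Real.exp (a - p) := by
          rw [← hna, ← Real.exp_add, ← sub_eq_add_neg]
        have hEeq : Real.exp (-(2 * Real.exp (-p))) ^ n
            = Real.exp (-(2 * Real.exp (a - p))) := by
          rw [← Real.exp_nat_mul]
          exact congrArg Real.exp (by rw [← hnx]; ring)
        set E := Real.exp (-(2 * Real.exp (a - p))) with hE
        have hEn : E ≤ (1 - Real.exp (-p)) ^ n := by rw [← hEeq]; exact hpow
        have hstep : (p + 1) * (1 - (1 - Real.exp (-p)) ^ n) ≤ (p + 1) * (1 - E) :=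
          mul_le_mul_of_nonneg_left (by linarith) (by linarith)
        -- show (p+1) * E ≥ p + 1 - (a - L/2)
        have hsb : Real.sqrt b = Real.exp (L/2) := by
          have hb2 : Real.exp (L/2) ^ 2 = b := by
            rw [sq, ← Real.exp_add, add_halves]; exact hbL
          rw [← hb2, Real.sqrt_sq (Real.exp_pos _).le]
        have hmain : p + 1 - (a - L/2) ≤ (p + 1) * E := by
          have hA : p + 1 - (a - L/2) ≤ L := by linarith
          have hB : L ≤ Real.exp (b - 2 * Real.exp 1 * Real.sqrt b - 1) := by
            calc L = Real.exp (Real.log L) := (Real.exp_log hLpos).symm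
              _ ≤ _ := Real.exp_le_exp.mpr (keyK b hb4)
          have hC : Real.exp (b - 2 * Real.exp 1 * Real.sqrt b - 1)
              ≤ (a/2) * Real.exp (-(2 * Real.exp 1 * Real.sqrt b)) := by
            rw [show b - 2 * Real.exp 1 * Real.sqrt b - 1
                = b + -(2 * Real.exp 1 * Real.sqrt b) + (-1) by ring,
              Real.exp_add, Real.exp_add, hab]
            have hem1 : Real.exp (-1:ℝ) ≤ 1/2 := by
              have h5 : Real.exp (-1:ℝ) * Real.exp 1 = 1 := by
                rw [← Real.exp_add]; norm_num
              nlinarith [Real.exp_pos (-1:ℝ)]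
            have hpos : (0:ℝ) ≤ a * Real.exp (-(2 * Real.exp 1 * Real.sqrt b)) :=
              mul_nonneg apos.le (Real.exp_pos _).le
            nlinarith [mul_le_mul_of_nonneg_left hem1 hpos]
          have hD : (a/2) * Real.exp (-(2 * Real.exp 1 * Real.sqrt b)) ≤ (p + 1) * E := by
            apply mul_le_mul
            · linarith
            · apply Real.exp_le_exp.mpr
              have : Real.exp (a - p) ≤ Real.exp 1 * Real.sqrt b := by
                rw [hsb, ← Real.exp_add]
                exact Real.exp_le_exp.mpr (by linarith)
              linarith
            · exact (Real.exp_pos _).le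
            · linarith
          linarith
        nlinarith [hstep, hmain]
  linarith
end

section
/- Let n ≥ e^{e^{e^4}} and H_n − 1 ≤ p. Assuming the revenue function p ↦ p(1 − (1 − e^{−p})^n) is non-increasing on [H_n − 1, ∞), we have (p + 1)(1 − (1 − e^{−p})^n) ≤ (99/100)·H_n + 1. -/
open Real

/-- For `n ≥ e^{e^{e^4}}` and `p ≥ H_n - 1`, assuming the revenue function
`p ↦ p(1 - (1 - e^{-p})^n)` is non-increasing on `[H_n - 1, ∞)`, we have
`(p+1)(1 - (1 - e^{-p})^n) ≤ (99/100) H_n + 1`. -/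
theorem stmt17 (n : ℕ) (hn : Real.exp (Real.exp (Real.exp 4)) ≤ (n : ℝ))
    (p : ℝ) (hp : (harmonic n : ℝ) - 1 ≤ p)
    (hmono : AntitoneOn (fun x : ℝ => x * (1 - (1 - Real.exp (-x)) ^ n))
      (Set.Ici ((harmonic n : ℝ) - 1))) :
    (p + 1) * (1 - (1 - Real.exp (-p)) ^ n) ≤ (99 / 100) * (harmonic n : ℝ) + 1 := by
  set H : ℝ := (harmonic n : ℝ) with hH
  -- n is at least 100
  have hn100 : (100 : ℝ) ≤ (n : ℝ) := by
    have h1 : (6 : ℝ) ≤ Real.exp (Real.exp 4) := by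
      have : (5 : ℝ) ≤ Real.exp 4 := by
        nlinarith [Real.add_one_le_exp (4 : ℝ)]
      calc (6 : ℝ) ≤ (5 : ℝ) + 1 := by norm_num
        _ ≤ Real.exp 4 + 1 := by linarith
        _ ≤ Real.exp (Real.exp 4) := by nlinarith [Real.add_one_le_exp (Real.exp 4)]
    have h2 : (100 : ℝ) ≤ Real.exp 6 := by
      have he : (2.7182818283 : ℝ) < Real.exp 1 := Real.exp_one_gt_d9
      have : Real.exp 6 = (Real.exp 1) ^ (6 : ℕ) := by
        rw [← Real.exp_nat_mul]; norm_num
      rw [this]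
      calc (100:ℝ) ≤ (2.7182818283:ℝ)^(6:ℕ) := by norm_num
        _ ≤ (Real.exp 1)^(6:ℕ) := pow_le_pow_left₀ (by norm_num) he.le 6
    calc (100 : ℝ) ≤ Real.exp 6 := h2
      _ ≤ Real.exp (Real.exp (Real.exp 4)) := Real.exp_le_exp.mpr h1
      _ ≤ (n : ℝ) := hn
  have hnpos : (0 : ℝ) < n := by linarith
  -- log n ≤ H
  have hlog : Real.log n ≤ H := by
    rcases Nat.eq_zero_or_pos n with h0 | h0
    · exfalso; rw [h0] at hn100; norm_num at hn100
    · calc Real.log n ≤ Real.log (n + 1) := by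
            apply Real.log_le_log (by positivity); linarith
        _ ≤ H := by
            have h := log_add_one_le_harmonic n
            rw [hH]
            push_cast at h ⊢
            linarith
  have hHpos : (0 : ℝ) < H := by
    have : Real.log 100 ≤ Real.log n := Real.log_le_log (by norm_num) hn100
    have h100 : (0:ℝ) < Real.log 100 := Real.log_pos (by norm_num)
    linarith
  set t : ℝ := Real.exp (1 - H) with ht
  have htpos : 0 < t := Real.exp_pos _
  -- t ≤ e/n
  have hte : t ≤ Real.exp 1 / n := by
    rw [ht, ← Real.exp_log hnpos, ← Real.exp_sub]
    exact Real.exp_le_exp.mpr (by linarith)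
  have hen : Real.exp 1 / n ≤ 3 / 100 := by
    have he : Real.exp 1 < 3 := by
      nlinarith [Real.exp_one_lt_d9]
    rw [div_le_div_iff₀ hnpos (by norm_num)]
    nlinarith
  have ht' : t ≤ 3 / 100 := le_trans hte hen
  -- key: (1 - t)^n ≥ exp(-n t/(1-t)) ≥ exp(-3) ≥ 1/100
  have h1t : (0:ℝ) < 1 - t := by linarith
  have hexp_le : Real.exp (-(t / (1 - t))) ≤ 1 - t := by
    have h := Real.add_one_le_exp (t / (1 - t))
    have h2 : (1:ℝ) / (1 - t) = t / (1 - t) + 1 := by field_simp; ring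
    have h3 : (1:ℝ) / (1 - t) ≤ Real.exp (t / (1 - t)) := by linarith
    rw [Real.exp_neg]
    rw [inv_le_comm₀ (Real.exp_pos _) h1t]
    calc (1 - t)⁻¹ = 1 / (1 - t) := (one_div _).symm
      _ ≤ Real.exp (t / (1 - t)) := h3
  have hpow : Real.exp (-3) ≤ (1 - t) ^ n := by
    have h1 : Real.exp (-(t / (1 - t))) ^ n ≤ (1 - t) ^ n :=
      pow_le_pow_left₀ (Real.exp_pos _).le hexp_le n
    have h2 : Real.exp (-(t / (1 - t))) ^ n = Real.exp (-(n * (t / (1 - t)))) := by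
      rw [← Real.exp_nat_mul]; ring_nf
    have h3 : (n : ℝ) * (t / (1 - t)) ≤ 3 := by
      have hfrac : t / (1 - t) ≤ (Real.exp 1 / n) / (1 - Real.exp 1 / n) := by
        apply div_le_div₀ (by positivity) hte (by linarith) (by linarith)
      have h4 : (n:ℝ) * ((Real.exp 1 / n) / (1 - Real.exp 1 / n)) = Real.exp 1 / (1 - Real.exp 1 / n) := by
        field_simp
      have he3 : Real.exp 1 < 2.7182818286 := Real.exp_one_lt_d9
      have h5 : Real.exp 1 / (1 - Real.exp 1 / n) ≤ 3 := by
        rw [div_le_iff₀ (by nlinarith)]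
        have : Real.exp 1 / n ≤ 3/100 := hen
        nlinarith
      calc (n:ℝ) * (t / (1 - t)) ≤ (n:ℝ) * ((Real.exp 1 / n) / (1 - Real.exp 1 / n)) := by
            apply mul_le_mul_of_nonneg_left hfrac hnpos.le
        _ ≤ 3 := by rw [h4]; exact h5
    calc Real.exp (-3) ≤ Real.exp (-(n * (t / (1 - t)))) :=
          Real.exp_le_exp.mpr (by linarith)
      _ = Real.exp (-(t / (1 - t))) ^ n := h2.symm
      _ ≤ (1 - t) ^ n := h1
  have hc : (1:ℝ)/100 ≤ (1 - t) ^ n := by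
    refine le_trans ?_ hpow
    have h3 : Real.exp 3 ≤ 100 := by
      have he : Real.exp 1 < 2.7182818286 := Real.exp_one_lt_d9
      have h2 : Real.exp 3 = (Real.exp 1)^(3:ℕ) := by rw [← Real.exp_nat_mul]; norm_num
      rw [h2]
      calc (Real.exp 1)^(3:ℕ) ≤ (2.7182818286:ℝ)^(3:ℕ) :=
            pow_le_pow_left₀ (Real.exp_pos 1).le he.le 3
        _ ≤ 100 := by norm_num
    rw [Real.exp_neg, one_div]
    exact inv_anti₀ (Real.exp_pos _) h3
  -- now use monotonicity
  have hp0mem : (H - 1) ∈ Set.Ici (H - 1) := Set.self_mem_Ici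
  have hpmem : p ∈ Set.Ici (H - 1) := hp
  have hmono' := hmono hp0mem hpmem hp
  simp only at hmono'
  -- e^{-p} ≤ t and bounds
  have hept : Real.exp (-p) ≤ t := by
    rw [ht]; exact Real.exp_le_exp.mpr (by linarith)
  have hept0 : (0:ℝ) < Real.exp (-p) := Real.exp_pos _
  have hA : (1 - Real.exp (-p)) ^ n ≥ (1 - t) ^ n :=
    pow_le_pow_left₀ h1t.le (by linarith) n
  have hA1 : (1 - Real.exp (-p)) ^ n ≤ 1 := by
    apply pow_le_one₀ (by linarith) (by linarith)
  have hA0 : 1 - (1 - Real.exp (-p)) ^ n ≤ 99/100 := by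
    have := hc
    linarith
  have key : (p + 1) * (1 - (1 - Real.exp (-p)) ^ n)
      ≤ (H - 1) * (1 - (1 - t) ^ n) + (1 - (1 - Real.exp (-p)) ^ n) := by
    have heq : Real.exp (-(H - 1)) = t := by rw [ht]; ring_nf
    have : p * (1 - (1 - Real.exp (-p)) ^ n) ≤ (H - 1) * (1 - (1 - t) ^ n) := by
      have := hmono'
      rwa [heq] at this
    linarith
  have htA : 1 - (1 - t) ^ n ≤ 99/100 := by linarith
  have hHm1 : (0:ℝ) ≤ H - 1 := by
    have : Real.log 100 ≤ Real.log n := Real.log_le_log (by norm_num) hn100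
    have h100 : Real.log 100 ≥ 2 := by
      have : Real.exp 2 ≤ 100 := by
        have he : Real.exp 1 < 2.7182818286 := Real.exp_one_lt_d9
        have h2 : Real.exp 2 = (Real.exp 1)^(2:ℕ) := by rw [← Real.exp_nat_mul]; norm_num
        rw [h2]; nlinarith [Real.exp_pos (1:ℝ)]
      have := Real.log_le_log (Real.exp_pos 2) this
      rwa [Real.log_exp] at this
    linarith
  calc (p + 1) * (1 - (1 - Real.exp (-p)) ^ n)
      ≤ (H - 1) * (1 - (1 - t) ^ n) + (1 - (1 - Real.exp (-p)) ^ n) := key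
    _ ≤ (H - 1) * (99/100) + 1 := by
        have h1 : (H - 1) * (1 - (1 - t) ^ n) ≤ (H - 1) * (99/100) :=
          mul_le_mul_of_nonneg_left htA hHm1
        linarith
    _ ≤ (99 / 100) * H + 1 := by nlinarith
end

section
/- Let X_1, …, X_n be i.i.d. from a continuous MHR distribution with quantile function F^{-1}, and suppose m ≤ n/(log log n)². With static prices p_j = F_j^{-1}(1 − q), q = (log log n)/n for each of m items (values independent across items, each item j having MHR marginal F_j), the probability that a fixed item j remains unsold after all n unit-demand buyers is at most e/log n. -/
open MeasureTheory Real ProbabilityTheory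

/-- Static pricing with independent item valuations: with `m ≤ n/(log log n)²` items,
MHR marginals `F j`, prices `p j = F_j⁻¹(1 - q)` for `q = log log n / n`, any fixed item
`j` remains unsold after all `n` unit-demand buyers with probability at most `e / log n`.
The event `sold` (item `j` is sold) contains, for each buyer `i`, the event that buyer
`i`'s value for `j` exceeds its price while all other values are below their prices
(in which case the unit-demand buyer certainly buys item `j` if it is still available). -/
theorem stmt18 {Ω : Type*} [MeasurableSpace Ω] (μ : Measure Ω) [IsProbabilityMeasure μ]
    (n m : ℕ) (hm : 0 < m)
    (hn : Real.exp (Real.exp 1) ≤ (n : ℝ))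
    (hmn : (m : ℝ) ≤ n / (Real.log (Real.log n)) ^ 2)
    (F Finv : Fin m → ℝ → ℝ)
    (hFcont : ∀ j, Continuous (F j))
    (hquant : ∀ j, ∀ y ∈ Set.Icc (0:ℝ) 1, F j (Finv j y) = y)
    (hMHR : ∀ j, ConcaveOn ℝ {x : ℝ | F j x < 1} (fun x => Real.log (1 - F j x)))
    (v : Fin n → Fin m → Ω → ℝ)
    (hmeas : ∀ i j, Measurable (v i j))
    (hCDF : ∀ i j, ∀ t : ℝ, μ {ω | v i j ω ≤ t} = ENNReal.ofReal (F j t))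
    (hindep : iIndepFun
      (fun (ij : Fin n × Fin m) ω => v ij.1 ij.2 ω) μ)
    (q : ℝ) (hq : q = Real.log (Real.log n) / n)
    (price : Fin m → ℝ) (hprice : ∀ j, price j = Finv j (1 - q))
    (j : Fin m)
    (sold : Set Ω) (hsold_meas : MeasurableSet sold)
    (hsold : ∀ ω, (∃ i : Fin n, price j < v i j ω ∧
      ∀ j' : Fin m, j' ≠ j → v i j' ω ≤ price j') → ω ∈ sold) :
    μ soldᶜ ≤ ENNReal.ofReal (Real.exp 1 / Real.log n) := by
  classical
  -- Real-number preliminaries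
  have hn0 : (0:ℝ) < n := lt_of_lt_of_le (Real.exp_pos _) hn
  have hlogn : Real.exp 1 ≤ Real.log n := by
    rw [← Real.log_exp (Real.exp 1)]
    exact Real.log_le_log (Real.exp_pos _) hn
  have hlogn0 : (0:ℝ) < Real.log n := lt_of_lt_of_le (Real.exp_pos 1) hlogn
  set L : ℝ := Real.log (Real.log n) with hLdef
  have hL1 : 1 ≤ L := by
    have := Real.log_le_log (Real.exp_pos 1) hlogn
    rwa [Real.log_exp] at this
  have hL0 : (0:ℝ) < L := lt_of_lt_of_le one_pos hL1
  have hq0 : 0 ≤ q := by rw [hq]; positivity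
  have hq1 : q ≤ 1 := by
    rw [hq, div_le_one hn0]
    calc L ≤ Real.log n := Real.log_le_self hlogn0.le
    _ ≤ n := Real.log_le_self hn0.le
  -- measure of the basic half-line events
  have hFq : ∀ j' : Fin m, F j' (price j') = 1 - q := by
    intro j'
    rw [hprice]
    exact hquant j' (1 - q) ⟨by linarith, by linarith⟩
  have hIic : ∀ (i : Fin n) (j' : Fin m),
      μ (v i j' ⁻¹' Set.Iic (price j')) = ENNReal.ofReal (1 - q) := by
    intro i j'
    have h := hCDF i j' (price j')
    rw [hFq j'] at h
    exact h
  have hofq : ENNReal.ofReal q = 1 - ENNReal.ofReal (1 - q) := by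
    rw [← ENNReal.ofReal_one, ← ENNReal.ofReal_sub _ (by linarith : (0:ℝ) ≤ 1 - q)]
    norm_num
  have hIoi : ∀ i : Fin n,
      μ (v i j ⁻¹' Set.Ioi (price j)) = ENNReal.ofReal q := by
    intro i
    have hms : MeasurableSet (v i j ⁻¹' Set.Iic (price j)) :=
      hmeas i j measurableSet_Iic
    have hc : v i j ⁻¹' Set.Ioi (price j) = (v i j ⁻¹' Set.Iic (price j))ᶜ := by
      ext ω; simp [not_le]
    rw [hc, measure_compl hms (measure_ne_top μ _), hIic i j, measure_univ, hofq]
  -- the per-buyer target sets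
  set t0 : Fin m → Set ℝ :=
    fun j' => if j' = j then Set.Ioi (price j) else Set.Iic (price j') with ht0def
  have ht0meas : ∀ j', MeasurableSet (t0 j') := by
    intro j'
    by_cases h : j' = j <;> simp [ht0def, h]
  set E : Fin n → Set Ω := fun i => ⋂ j' : Fin m, v i j' ⁻¹' t0 j' with hEdef
  -- key product formula for a single buyer
  have key : ∀ (i : Fin n) (t : Fin m → Set ℝ), (∀ j', MeasurableSet (t j')) →
      μ (⋂ j' : Fin m, v i j' ⁻¹' t j') = ∏ j' : Fin m, μ (v i j' ⁻¹' t j') := by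
    intro i t ht
    have h := hindep.meas_biInter (S := {i} ×ˢ (Finset.univ : Finset (Fin m)))
      (s := fun p => v p.1 p.2 ⁻¹' t p.2)
      (fun p _ => ⟨t p.2, ht p.2, rfl⟩)
    have hL' : (⋂ p ∈ ({i} ×ˢ (Finset.univ : Finset (Fin m))), v p.1 p.2 ⁻¹' t p.2)
        = ⋂ j' : Fin m, v i j' ⁻¹' t j' := by
      ext ω
      simp [Finset.mem_product]
    have hR' : (∏ p ∈ ({i} ×ˢ (Finset.univ : Finset (Fin m))), μ (v p.1 p.2 ⁻¹' t p.2))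
        = ∏ j' : Fin m, μ (v i j' ⁻¹' t j') := by
      rw [Finset.prod_product, Finset.prod_singleton]
    rw [hL', hR'] at h
    exact h
  -- probability of each buyer's event
  set r : ℝ := q * (1 - q) ^ (m - 1) with hrdef
  have hr0 : 0 ≤ r := by
    apply mul_nonneg hq0
    exact pow_nonneg (by linarith) _
  have hr1 : r ≤ 1 := by
    have : (1 - q) ^ (m - 1) ≤ 1 := pow_le_one₀ (by linarith) (by linarith)
    calc r ≤ 1 * 1 := by
            apply mul_le_mul hq1 this (pow_nonneg (by linarith) _) zero_le_one
    _ = 1 := by ring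
  have hEi : ∀ i : Fin n, μ (E i) = ENNReal.ofReal r := by
    intro i
    rw [hEdef]
    rw [key i t0 ht0meas]
    have hterm : ∀ j' : Fin m, μ (v i j' ⁻¹' t0 j')
        = if j' = j then ENNReal.ofReal q else ENNReal.ofReal (1 - q) := by
      intro j'
      by_cases h : j' = j
      · subst h; simp only [ht0def, if_pos rfl]; exact hIoi i
      · simp only [ht0def, if_neg h]; exact hIic i j'
    rw [Finset.prod_congr rfl (fun j' _ => hterm j')]
    rw [← Finset.mul_prod_erase Finset.univ _ (Finset.mem_univ j)]
    rw [if_pos rfl]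
    rw [Finset.prod_congr rfl (fun j' hj' => if_neg (Finset.ne_of_mem_erase hj'))]
    rw [Finset.prod_const, Finset.card_erase_of_mem (Finset.mem_univ j), Finset.card_univ,
      Fintype.card_fin]
    rw [hrdef, ENNReal.ofReal_mul hq0, ENNReal.ofReal_pow (by linarith : (0:ℝ) ≤ 1 - q)]
  have hEmeas : ∀ i, MeasurableSet (E i) := by
    intro i
    exact MeasurableSet.iInter fun j' => hmeas i j' (ht0meas j')
  -- independence across buyers via pi-systems
  set piS : Fin n → Set (Set Ω) := fun i =>
    {S | ∃ t : Fin m → Set ℝ, (∀ j', MeasurableSet (t j')) ∧ S = ⋂ j' : Fin m, v i j' ⁻¹' t j'}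
    with hpiSdef
  have hpiSpi : ∀ i, IsPiSystem (piS i) := by
    intro i S hS T hT _
    obtain ⟨t, ht, rfl⟩ := hS
    obtain ⟨t', ht', rfl⟩ := hT
    refine ⟨fun j' => t j' ∩ t' j', fun j' => (ht j').inter (ht' j'), ?_⟩
    ext ω
    simp only [Set.mem_inter_iff, Set.mem_iInter, Set.mem_preimage]
    constructor
    · rintro ⟨h1, h2⟩ j'; exact ⟨h1 j', h2 j'⟩
    · intro h; exact ⟨fun j' => (h j').1, fun j' => (h j').2⟩
  have hpiSle : ∀ i, MeasurableSpace.generateFrom (piS i) ≤ ‹MeasurableSpace Ω› := by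
    intro i
    apply MeasurableSpace.generateFrom_le
    rintro S ⟨t, ht, rfl⟩
    exact MeasurableSet.iInter fun j' => hmeas i j' (ht j')
  have hpiSind : iIndepSets piS μ := by
    rw [iIndepSets_iff]
    intro S f hf
    have hfS : ∀ i ∈ S, ∃ t : Fin m → Set ℝ, (∀ j', MeasurableSet (t j')) ∧
        f i = ⋂ j' : Fin m, v i j' ⁻¹' t j' := fun i hi => hf i hi
    choose! t ht hft using hfS
    have htmeas : ∀ i j', MeasurableSet ((fun i => if i ∈ S then t i else fun _ => Set.univ) i j') := by
      intro i j'
      by_cases h : i ∈ S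
      · simp only [if_pos h]; exact ht i h j'
      · simp only [if_neg h]; exact MeasurableSet.univ
    set t' : Fin n → Fin m → Set ℝ := fun i => if i ∈ S then t i else fun _ => Set.univ
      with ht'def
    have h := hindep.meas_biInter (S := S ×ˢ (Finset.univ : Finset (Fin m)))
      (s := fun p => v p.1 p.2 ⁻¹' t' p.1 p.2)
      (fun p _ => ⟨t' p.1 p.2, htmeas p.1 p.2, rfl⟩)
    have hL' : (⋂ p ∈ (S ×ˢ (Finset.univ : Finset (Fin m))), v p.1 p.2 ⁻¹' t' p.1 p.2)
        = ⋂ i ∈ S, f i := by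
      ext ω
      simp only [Set.mem_iInter, Set.mem_preimage, Finset.mem_product, Finset.mem_univ,
        and_true]
      constructor
      · intro h' i hi
        rw [hft i hi]
        simp only [Set.mem_iInter, Set.mem_preimage]
        intro j'
        have := h' (i, j') hi
        simp only [ht'def, if_pos hi] at this
        exact this
      · intro h' p hp
        have := h' p.1 hp
        rw [hft p.1 hp] at this
        simp only [Set.mem_iInter, Set.mem_preimage] at this
        simp only [ht'def, if_pos hp]
        exact this p.2
    have hR' : (∏ p ∈ (S ×ˢ (Finset.univ : Finset (Fin m))), μ (v p.1 p.2 ⁻¹' t' p.1 p.2))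
        = ∏ i ∈ S, μ (f i) := by
      rw [Finset.prod_product]
      apply Finset.prod_congr rfl
      intro i hi
      have ht'i : t' i = t i := by simp only [ht'def, if_pos hi]
      show (∏ j' : Fin m, μ (v i j' ⁻¹' t' i j')) = μ (f i)
      rw [ht'i, hft i hi, key i (t i) (ht i hi)]
    rw [hL', hR'] at h
    exact h
  have hiIndep : iIndep (fun i => MeasurableSpace.generateFrom (piS i)) μ :=
    iIndepSets.iIndep (m := fun i => MeasurableSpace.generateFrom (piS i)) hpiSle piS hpiSpi (fun _ => rfl) hpiSind
  have hEgen : ∀ i, MeasurableSet[MeasurableSpace.generateFrom (piS i)] (E i) := by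
    intro i
    exact MeasurableSpace.measurableSet_generateFrom ⟨t0, ht0meas, rfl⟩
  have hprod : μ (⋂ i, (E i)ᶜ) = ∏ i : Fin n, μ ((E i)ᶜ) :=
    hiIndep.meas_iInter fun i => (hEgen i).compl
  -- inclusion
  have hsub : soldᶜ ⊆ ⋂ i, (E i)ᶜ := by
    intro ω hω
    simp only [Set.mem_iInter, Set.mem_compl_iff]
    intro i hEi'
    apply hω
    apply hsold
    refine ⟨i, ?_, ?_⟩
    · have := Set.mem_iInter.1 hEi' j
      simpa [ht0def] using this
    · intro j' hj'
      have := Set.mem_iInter.1 hEi' j'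
      simpa [ht0def, hj'] using this
  -- probability of each complement
  have hEic : ∀ i, μ ((E i)ᶜ) = ENNReal.ofReal (1 - r) := by
    intro i
    rw [measure_compl (hEmeas i) (measure_ne_top μ _), measure_univ, hEi i]
    rw [← ENNReal.ofReal_one, ← ENNReal.ofReal_sub _ hr0]
  -- the real-number estimate
  have hnq : (n : ℝ) * q = L := by
    rw [hq]; field_simp
  have hmq : (m : ℝ) * q ≤ 1 / L := by
    have : (m : ℝ) * q ≤ (n / L ^ 2) * (L / n) := by
      rw [hq]
      apply mul_le_mul hmn le_rfl (by positivity) (by positivity)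
    calc (m : ℝ) * q ≤ (n / L ^ 2) * (L / n) := this
    _ = 1 / L := by field_simp
  have hbern : 1 - ((m : ℝ) - 1) * q ≤ (1 - q) ^ (m - 1) := by
    have h := one_add_mul_le_pow (by linarith : (-2:ℝ) ≤ -q) (m - 1)
    have hcast : ((m - 1 : ℕ) : ℝ) = (m : ℝ) - 1 := by
      rw [Nat.cast_sub hm, Nat.cast_one]
    rw [hcast] at h
    calc 1 - ((m:ℝ) - 1) * q = 1 + ((m:ℝ) - 1) * (-q) := by ring
    _ ≤ (1 + (-q)) ^ (m - 1) := h
    _ = (1 - q) ^ (m - 1) := by ring_nf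
  have hnr : L - 1 ≤ (n : ℝ) * r := by
    have h1 : 1 - 1 / L ≤ (1 - q) ^ (m - 1) := by
      have : 1 - 1/L ≤ 1 - ((m:ℝ) - 1) * q := by
        have hmq' : ((m:ℝ) - 1) * q ≤ (m:ℝ) * q := by nlinarith
        linarith [hmq]
      linarith [hbern]
    have h2 : (n:ℝ) * q * (1 - 1/L) ≤ (n:ℝ) * q * ((1 - q) ^ (m - 1)) := by
      apply mul_le_mul_of_nonneg_left h1 (by positivity)
    have h3 : (n:ℝ) * q * (1 - 1/L) = L - 1 := by
      rw [hnq]; field_simp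
    rw [hrdef]
    calc L - 1 = (n:ℝ) * q * (1 - 1/L) := h3.symm
    _ ≤ (n:ℝ) * q * ((1 - q) ^ (m - 1)) := h2
    _ = (n:ℝ) * (q * (1 - q) ^ (m - 1)) := by ring
  have hreal : (1 - r) ^ n ≤ Real.exp 1 / Real.log n := by
    have h1 : (1 - r) ≤ Real.exp (-r) := by
      have := Real.add_one_le_exp (-r)
      linarith
    have h2 : (1 - r) ^ n ≤ (Real.exp (-r)) ^ n :=
      pow_le_pow_left₀ (by linarith) h1 n
    have h3 : (Real.exp (-r)) ^ n = Real.exp ((n:ℝ) * (-r)) := by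
      rw [← Real.exp_nat_mul]
    have h4 : Real.exp ((n:ℝ) * (-r)) ≤ Real.exp (1 - L) := by
      apply Real.exp_le_exp.2
      have : (n:ℝ) * (-r) = -((n:ℝ) * r) := by ring
      rw [this]
      linarith [hnr]
    have h5 : Real.exp (1 - L) = Real.exp 1 / Real.log n := by
      rw [Real.exp_sub, hLdef, Real.exp_log hlogn0]
    calc (1 - r) ^ n ≤ (Real.exp (-r)) ^ n := h2
    _ = Real.exp ((n:ℝ) * (-r)) := h3
    _ ≤ Real.exp (1 - L) := h4
    _ = Real.exp 1 / Real.log n := h5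
  -- putting it all together
  calc μ soldᶜ ≤ μ (⋂ i, (E i)ᶜ) := measure_mono hsub
  _ = ∏ i : Fin n, μ ((E i)ᶜ) := hprod
  _ = ∏ _i : Fin n, ENNReal.ofReal (1 - r) := Finset.prod_congr rfl (fun i _ => hEic i)
  _ = (ENNReal.ofReal (1 - r)) ^ n := by rw [Finset.prod_const, Finset.card_univ,
        Fintype.card_fin]
  _ = ENNReal.ofReal ((1 - r) ^ n) := by rw [ENNReal.ofReal_pow (by linarith)]
  _ ≤ ENNReal.ofReal (Real.exp 1 / Real.log n) := ENNReal.ofReal_le_ofReal hreal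
end
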